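/- arXiv:1502.01840 — 3 statements merged into one kernel-verified Lean document; each statement's English description precedes it below -/
import Mathlib

section
/- Suppose T_τψ ∉ B(0,r), the unique continuation property (B*T*_tη = 0 on a set of positive measure ⟹ η = 0) holds, and let η̂ be the minimizer of J^τ. Then f̂(t) = (∫_0^τ ||B*T*_{τ-s}η̂||_U ds) · B*T*_{τ-t}η̂ / ||B*T*_{τ-t}η̂||_U is the norm optimal control for (NP)^τ, and the optimal norm satisfies N*(τ) = ∫_0^τ ||B*T*_{τ-t}η̂||_U dt. -/
open MeasureTheory Filter
open scoped RealInnerProductSpace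

/-- The state trajectory `z(t;ψ,f) = T_t ψ + ∫_0^t T_{t-σ} B f(σ) dσ`. -/
noncomputable def traj {X U : Type*} [NormedAddCommGroup X] [NormedSpace ℝ X] [CompleteSpace X]
    [NormedAddCommGroup U] [NormedSpace ℝ U]
    (T : ℝ → X →L[ℝ] X) (B : U →L[ℝ] X) (ψ : X) (u : ℝ → U) (t : ℝ) : X :=
  T t ψ + ∫ σ in Set.Ioc 0 t, T (t - σ) (B (u σ))

/-- The functional `J^τ(η) = ½(∫_0^τ ‖B*T*_{τ-t}η‖ dt)² + ⟨ψ, T*_τ η⟩ + r‖η‖`. -/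
noncomputable def Jfun {X U : Type*} [NormedAddCommGroup X] [InnerProductSpace ℝ X]
    [CompleteSpace X] [NormedAddCommGroup U] [InnerProductSpace ℝ U] [CompleteSpace U]
    (T : ℝ → X →L[ℝ] X) (B : U →L[ℝ] X) (r : ℝ) (ψ : X) (τ : ℝ) (η : X) : ℝ :=
  (1 / 2) * (∫ t in Set.Ioc 0 τ, ‖B.adjoint ((T (τ - t)).adjoint η)‖) ^ 2 +
    ⟪ψ, (T τ).adjoint η⟫ + r * ‖η‖

section Aux
variable {X U : Type*} [NormedAddCommGroup X] [InnerProductSpace ℝ X] [CompleteSpace X]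
  [NormedAddCommGroup U] [InnerProductSpace ℝ U] [CompleteSpace U]

lemma sg_bound (T : ℝ → X →L[ℝ] X) (hTcont : ∀ x : X, Continuous fun t => T t x) (a b : ℝ) :
    ∃ M : ℝ, 0 ≤ M ∧ ∀ s ∈ Set.Icc a b, ‖T s‖ ≤ M := by
  have h : ∀ x : X, ∃ C, ∀ i : Set.Icc a b, ‖T i x‖ ≤ C := by
    intro x
    obtain ⟨C, hC⟩ := isCompact_Icc.exists_bound_of_continuousOn
      ((hTcont x).continuousOn : ContinuousOn (fun t => T t x) (Set.Icc a b))
    exact ⟨C, fun i => hC i i.2⟩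
  obtain ⟨C', hC'⟩ := banach_steinhaus h
  exact ⟨max C' 0, le_max_right _ _, fun s hs => le_trans (hC' ⟨s, hs⟩) (le_max_left _ _)⟩

lemma sg_cont2 (T : ℝ → X →L[ℝ] X) (hTcont : ∀ x : X, Continuous fun t => T t x) :
    Continuous fun p : ℝ × X => T p.1 p.2 := by
  rw [continuous_iff_continuousAt]
  rintro ⟨t₀, x₀⟩
  obtain ⟨M, hM0, hM⟩ := sg_bound T hTcont (t₀ - 1) (t₀ + 1)
  rw [ContinuousAt, ← tendsto_sub_nhds_zero_iff]
  have hb : Tendsto (fun p : ℝ × X => M * ‖p.2 - x₀‖ + ‖T p.1 x₀ - T t₀ x₀‖)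
      (nhds (t₀, x₀)) (nhds 0) := by
    have h1 : Tendsto (fun p : ℝ × X => M * ‖p.2 - x₀‖) (nhds (t₀, x₀)) (nhds (M * ‖x₀ - x₀‖)) :=
      (tendsto_const_nhds.mul ((continuous_snd.sub continuous_const).norm.tendsto _))
    have h2 : Tendsto (fun p : ℝ × X => ‖T p.1 x₀ - T t₀ x₀‖) (nhds (t₀, x₀))
        (nhds ‖T t₀ x₀ - T t₀ x₀‖) :=
      ((((hTcont x₀).comp continuous_fst).sub continuous_const).norm.tendsto _)
    simpa using h1.add h2
  apply squeeze_zero_norm' _ hb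
  have hev : ∀ᶠ p : ℝ × X in nhds (t₀, x₀), p.1 ∈ Set.Icc (t₀ - 1) (t₀ + 1) := by
    have : Set.Icc (t₀ - 1) (t₀ + 1) ∈ nhds t₀ := Icc_mem_nhds (by linarith) (by linarith)
    exact continuous_fst.continuousAt (x := (t₀, x₀)) this
  filter_upwards [hev] with p hp
  have : T p.1 p.2 - T t₀ x₀ = T p.1 (p.2 - x₀) + (T p.1 x₀ - T t₀ x₀) := by
    rw [map_sub]; abel
  rw [this]
  calc ‖T p.1 (p.2 - x₀) + (T p.1 x₀ - T t₀ x₀)‖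
      ≤ ‖T p.1 (p.2 - x₀)‖ + ‖T p.1 x₀ - T t₀ x₀‖ := norm_add_le _ _
    _ ≤ M * ‖p.2 - x₀‖ + ‖T p.1 x₀ - T t₀ x₀‖ := by
        gcongr
        exact le_trans ((T p.1).le_opNorm _) (by gcongr; exact hM _ hp)

end Aux
section Aux
variable {X U : Type*} [NormedAddCommGroup X] [InnerProductSpace ℝ X] [CompleteSpace X]
  [NormedAddCommGroup U] [InnerProductSpace ℝ U] [CompleteSpace U]

lemma hasDerivAt_norm_add_smul (v w : U) (hv : v ≠ 0) :
    HasDerivAt (fun s : ℝ => ‖v + s • w‖) ⟪‖v‖⁻¹ • v, w⟫ 0 := by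
  have key : ∀ s : ℝ, ‖v + s • w‖ =
      Real.sqrt (‖v‖ ^ 2 + s * (2 * ⟪v, w⟫) + s ^ 2 * ‖w‖ ^ 2) := by
    intro s
    rw [← Real.sqrt_sq (norm_nonneg (v + s • w)), norm_add_sq_real,
      real_inner_smul_right, norm_smul, Real.norm_eq_abs]
    rw [mul_pow, sq_abs]
    ring_nf
  have hp : HasDerivAt (fun s : ℝ => ‖v‖ ^ 2 + s * (2 * ⟪v, w⟫) + s ^ 2 * ‖w‖ ^ 2)
      (2 * ⟪v, w⟫) 0 := by
    have h1 : HasDerivAt (fun s : ℝ => ‖v‖ ^ 2 + s * (2 * ⟪v, w⟫) + s ^ 2 * ‖w‖ ^ 2)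
        (0 + 1 * (2 * ⟪v, w⟫) + (2:ℕ) * (0:ℝ) ^ (2-1) * ‖w‖ ^ 2) 0 := by
      exact ((hasDerivAt_const _ _).add ((hasDerivAt_id 0).mul_const _)).add
        (((hasDerivAt_pow 2 (0:ℝ)).mul_const _))
    simpa using h1
  have hne : ‖v‖ ^ 2 + (0:ℝ) * (2 * ⟪v, w⟫) + 0 ^ 2 * ‖w‖ ^ 2 ≠ 0 := by
    have h := norm_pos_iff.2 hv
    simp only [zero_mul, add_zero, zero_pow, two_ne_zero, ne_eq]
    positivity
  have := (Real.hasDerivAt_sqrt (by simpa using hne)).comp 0 hp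
  simp only [key]
  refine this.congr_deriv ?_
  have h0 : Real.sqrt (‖v‖ ^ 2 + 0 * (2 * ⟪v, w⟫) + 0 ^ 2 * ‖w‖ ^ 2) = ‖v‖ := by
    simp [Real.sqrt_sq (norm_nonneg v)]
  rw [real_inner_smul_left]
  simp only [h0]
  have : ‖v‖ ≠ 0 := norm_ne_zero_iff.2 hv
  field_simp
end Aux
section Aux
variable {X U : Type*} [NormedAddCommGroup X] [InnerProductSpace ℝ X] [CompleteSpace X]
  [NormedAddCommGroup U] [InnerProductSpace ℝ U] [CompleteSpace U]

/-- A weakly continuous function into a Hilbert space is strongly measurable (Pettis). -/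
lemma stronglyMeasurable_of_weakly_continuous (φ : ℝ → U)
    (hw : ∀ u : U, Continuous fun t => ⟪φ t, u⟫) : StronglyMeasurable φ := by
  -- separable closed subspace containing the range
  set K : Set U := Set.range fun q : ℚ => φ q with hK
  set Y : Submodule ℝ U := (Submodule.span ℝ K).topologicalClosure with hY
  have hYsep : TopologicalSpace.IsSeparable (Y : Set U) := by
    have h1 : TopologicalSpace.IsSeparable (Submodule.span ℝ K : Set U) :=
      TopologicalSpace.IsSeparable.span ((Set.countable_range _).isSeparable)
    simpa [hY, Submodule.topologicalClosure_coe] using h1.closure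
  have hmem : ∀ t : ℝ, φ t ∈ Y := by
    intro t
    have : Yᗮᗮ = Y := Submodule.orthogonal_orthogonal Y
    rw [← this, Submodule.mem_orthogonal]
    intro w hwY
    -- ⟪w, φ t⟫ = 0 since it vanishes on the rationals and is continuous
    have hcont : Continuous fun t => ⟪w, φ t⟫ := by
      have := hw w
      simpa [real_inner_comm] using this
    have hzero : ∀ q : ℚ, ⟪w, φ (q : ℝ)⟫ = 0 := by
      intro q
      have hφq : φ (q : ℝ) ∈ Y := by
        apply Submodule.le_topologicalClosure
        exact Submodule.subset_span ⟨q, rfl⟩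
      rw [real_inner_comm]
      exact (Submodule.mem_orthogonal Y w).1 hwY _ hφq
    have : (fun t => ⟪w, φ t⟫) = fun _ => (0 : ℝ) := by
      apply Continuous.ext_on Rat.denseRange_cast hcont continuous_const
      rintro x ⟨q, rfl⟩
      exact hzero q
    exact congrFun this t
  have hsep : TopologicalSpace.IsSeparable (Set.range φ) :=
    hYsep.mono (Set.range_subset_iff.2 hmem)
  -- lower semicontinuity of the distance functions
  have hlsc : ∀ c : U, Measurable fun t => ‖φ t - c‖ := by
    intro c
    apply LowerSemicontinuous.measurable
    intro t y hy
    rcases eq_or_ne (φ t - c) 0 with h0 | h0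
    · have hyneg : y < 0 := by simp only [h0, norm_zero] at hy; exact hy
      exact Eventually.of_forall fun s => lt_of_lt_of_le hyneg (norm_nonneg _)
    · set u := ‖φ t - c‖⁻¹ • (φ t - c) with hu
      have hun : ‖u‖ = 1 := by
        rw [hu, norm_smul, norm_inv, Real.norm_eq_abs, abs_of_nonneg (norm_nonneg _),
          inv_mul_cancel₀ (norm_ne_zero_iff.2 h0)]
      have hval : ⟪φ t - c, u⟫ = ‖φ t - c‖ := by
        rw [hu, real_inner_smul_right, real_inner_self_eq_norm_mul_norm,
          ← mul_assoc, inv_mul_cancel₀ (norm_ne_zero_iff.2 h0), one_mul]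
      have hcont : Continuous fun s => ⟪φ s - c, u⟫ := by
        have h1 : ∀ s, ⟪φ s - c, u⟫ = ⟪φ s, u⟫ - ⟪c, u⟫ := fun s => by
          rw [inner_sub_left]
        simp only [h1]
        exact (hw u).sub continuous_const
      have hev : ∀ᶠ s in nhds t, y < ⟪φ s - c, u⟫ := by
        have : y < ⟪φ t - c, u⟫ := by rwa [hval]
        exact (hcont.tendsto t).eventually (eventually_gt_nhds this)
      filter_upwards [hev] with s hs
      calc y < ⟪φ s - c, u⟫ := hs
        _ ≤ ‖φ s - c‖ * ‖u‖ := real_inner_le_norm _ _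
        _ = ‖φ s - c‖ := by rw [hun, mul_one]
  -- measurability
  letI : MeasurableSpace U := borel U
  haveI : BorelSpace U := ⟨rfl⟩
  rw [stronglyMeasurable_iff_measurable_separable]
  refine ⟨?_, hsep⟩
  have hgen : (borel U : MeasurableSpace U) = MeasurableSpace.generateFrom {s | IsOpen s} := rfl
  obtain ⟨D, hDc, hDd⟩ := hsep
  apply measurable_generateFrom
  intro O hO
  simp only [Set.mem_setOf_eq] at hO
  have hunion : φ ⁻¹' O = ⋃ c ∈ D, ⋃ q : ℚ,
      {t | ‖φ t - c‖ < (q : ℝ) ∧ Metric.ball c (q : ℝ) ⊆ O} := by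
    ext t
    simp only [Set.mem_preimage, Set.mem_iUnion, Set.mem_setOf_eq]
    constructor
    · intro ht
      obtain ⟨ε, hε, hball⟩ := Metric.isOpen_iff.1 hO _ ht
      have hφD : φ t ∈ closure D := hDd ⟨t, rfl⟩
      obtain ⟨c, hcD, hdist⟩ := Metric.mem_closure_iff.1 hφD (ε / 2) (by linarith)
      obtain ⟨q, hq1, hq2⟩ := exists_rat_btwn hdist
      refine ⟨c, hcD, q, ?_, ?_⟩
      · rwa [← dist_eq_norm]
      · intro y hy
        apply hball
        have : dist y (φ t) ≤ dist y c + dist c (φ t) := dist_triangle _ _ _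
        rw [Metric.mem_ball] at hy ⊢
        rw [dist_comm c (φ t)] at this
        calc dist y (φ t) ≤ dist y c + dist (φ t) c := this
          _ < (q : ℝ) + ε / 2 := by exact add_lt_add hy hdist
          _ ≤ ε / 2 + ε / 2 := by linarith
          _ = ε := by ring
    · rintro ⟨c, _, q, hlt, hsub⟩
      apply hsub
      rw [Metric.mem_ball, dist_eq_norm]
      exact hlt
  rw [hunion]
  apply MeasurableSet.biUnion hDc
  intro c _
  apply MeasurableSet.iUnion
  intro q
  have : {t | ‖φ t - c‖ < (q : ℝ) ∧ Metric.ball c (q : ℝ) ⊆ O}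
      = {t | ‖φ t - c‖ < (q : ℝ)} ∩ {t : ℝ | Metric.ball c (q : ℝ) ⊆ O} := by
    ext t; simp [Set.mem_setOf_eq, Set.mem_inter_iff]
  rw [this]
  exact ((hlsc c) measurableSet_Iio).inter (MeasurableSet.const _)
end Aux
set_option maxHeartbeats 2000000 in
/-- Suppose `T_τ ψ ∉ B(0,r)`, the unique continuation property holds, and
let `η̂` be the minimizer of `J^τ`. Then
`f̂(t) = (∫_0^τ ‖B*T*_{τ-s}η̂‖ ds) · B*T*_{τ-t}η̂ / ‖B*T*_{τ-t}η̂‖`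
is the norm optimal control for `(NP)^τ`, and `N*(τ) = ∫_0^τ ‖B*T*_{τ-t}η̂‖ dt`. -/
theorem stmt11 {X U : Type*} [NormedAddCommGroup X] [InnerProductSpace ℝ X] [CompleteSpace X]
    [NormedAddCommGroup U] [InnerProductSpace ℝ U] [CompleteSpace U]
    (T : ℝ → X →L[ℝ] X) (B : U →L[ℝ] X)
    (hT0 : T 0 = 1)
    (hTadd : ∀ s t : ℝ, 0 ≤ s → 0 ≤ t → T (s + t) = (T s).comp (T t))
    (hTcont : ∀ x : X, Continuous fun t => T t x)
    -- unique continuation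
    (hUC : ∀ η : X, ∀ s : Set ℝ, MeasurableSet s → 0 < volume s →
      (∀ t ∈ s, B.adjoint ((T t).adjoint η) = 0) → η = 0)
    (r : ℝ) (hr : 0 < r) (ψ : X) (τ : ℝ) (hτ : 0 < τ)
    (hTψ : T τ ψ ∉ Metric.closedBall (0 : X) r)
    -- `η̂` is the minimizer of `J^τ`
    (ηh : X) (hηh : ∀ ξ : X, Jfun T B r ψ τ ηh ≤ Jfun T B r ψ τ ξ) :
    -- the norm optimal control and the optimal norm `N*(τ)`
    ∀ N : ℝ, N = ∫ t in Set.Ioc 0 τ, ‖B.adjoint ((T (τ - t)).adjoint ηh)‖ →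
    ∀ fh : ℝ → U, (∀ t : ℝ,
        fh t = N • (‖B.adjoint ((T (τ - t)).adjoint ηh)‖⁻¹ •
          B.adjoint ((T (τ - t)).adjoint ηh))) →
      -- `f̂` is admissible with `L^∞`-norm `N`
      ((∀ᵐ t ∂volume.restrict (Set.Ioo 0 τ), ‖fh t‖ = N) ∧
        traj T B ψ fh τ ∈ Metric.closedBall (0 : X) r ∧
      -- `f̂` is norm optimal: `N = N*(τ)`
        (∀ g : ℝ → U, ∀ C : ℝ, 0 ≤ C →
          AEStronglyMeasurable g (volume.restrict (Set.Ioo 0 τ)) →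
          (∀ᵐ t ∂volume.restrict (Set.Ioo 0 τ), ‖g t‖ ≤ C) →
          traj T B ψ g τ ∈ Metric.closedBall (0 : X) r → N ≤ C)) := by
  intro N hN fh hfh
  -- notation
  set Φ : X → ℝ → U := fun η t => B.adjoint ((T (τ - t)).adjoint η) with hΦ
  set μ : Measure ℝ := volume.restrict (Set.Ioc 0 τ) with hμ
  have hfh' : ∀ t : ℝ, fh t = N • (‖Φ ηh t‖⁻¹ • Φ ηh t) := by
    intro t; simp only [hΦ]; exact hfh t
  have hres : volume.restrict (Set.Ioo 0 τ) = μ := by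
    rw [hμ]; exact Measure.restrict_congr_set Ioo_ae_eq_Ioc
  -- strong measurability of Φ η
  have hsm : ∀ η : X, StronglyMeasurable (Φ η) := by
    intro η
    apply stronglyMeasurable_of_weakly_continuous
    intro u
    have h1 : ∀ t, ⟪Φ η t, u⟫ = ⟪η, T (τ - t) (B u)⟫ := by
      intro t
      simp only [hΦ]
      rw [ContinuousLinearMap.adjoint_inner_left, ContinuousLinearMap.adjoint_inner_left]
    simp only [h1]
    exact continuous_const.inner ((hTcont (B u)).comp (continuous_const.sub continuous_id))
  obtain ⟨M, hM0, hM⟩ := sg_bound T hTcont 0 τ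
  have hΦbd : ∀ η : X, ∀ t ∈ Set.Ioc (0:ℝ) τ, ‖Φ η t‖ ≤ ‖B.adjoint‖ * (M * ‖η‖) := by
    intro η t ht
    simp only [hΦ]
    calc ‖B.adjoint ((T (τ - t)).adjoint η)‖
        ≤ ‖B.adjoint‖ * ‖(T (τ - t)).adjoint η‖ := ContinuousLinearMap.le_opNorm _ _
      _ ≤ ‖B.adjoint‖ * (M * ‖η‖) := by
          gcongr
          calc ‖(T (τ - t)).adjoint η‖ ≤ ‖(T (τ - t)).adjoint‖ * ‖η‖ :=
                ContinuousLinearMap.le_opNorm _ _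
            _ ≤ M * ‖η‖ := by
                gcongr
                rw [LinearIsometryEquiv.norm_map ContinuousLinearMap.adjoint (T (τ - t))]
                exact hM _ ⟨by linarith [ht.2], by linarith [ht.1]⟩
  have hconst_int : ∀ c : ℝ, Integrable (fun _ : ℝ => c) μ := by
    intro c
    rw [hμ]
    exact integrableOn_const measure_Ioc_lt_top.ne
  have hΦint : ∀ η : X, Integrable (fun t => ‖Φ η t‖) μ := by
    intro η
    apply Integrable.mono' (hconst_int (‖B.adjoint‖ * (M * ‖η‖)))
      (hsm η).norm.aestronglyMeasurable
    rw [hμ]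
    filter_upwards [ae_restrict_mem measurableSet_Ioc] with t ht
    rw [Real.norm_eq_abs, abs_of_nonneg (norm_nonneg _)]
    exact hΦbd η t ht
  have hΦadd : ∀ (η ξ : X) (t : ℝ), Φ (η + ξ) t = Φ η t + Φ ξ t := by
    intro η ξ t; simp only [hΦ]; simp
  have hΦsmul : ∀ (c : ℝ) (η : X) (t : ℝ), Φ (c • η) t = c • Φ η t := by
    intro c η t; simp only [hΦ]; simp
  -- J rewritten
  have hJ : ∀ η : X, Jfun T B r ψ τ η
      = (1 / 2) * (∫ t, ‖Φ η t‖ ∂μ) ^ 2 + ⟪T τ ψ, η⟫ + r * ‖η‖ := by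
    intro η
    simp only [Jfun, ContinuousLinearMap.adjoint_inner_right, hμ, hΦ]
  have hD : r < ‖T τ ψ‖ := by
    simpa [Metric.mem_closedBall, dist_zero_right, not_le] using hTψ
  have hJ0 : Jfun T B r ψ τ 0 = 0 := by
    rw [hJ]
    simp only [hΦ]
    simp
  -- the minimizer is nonzero
  have hηne : ηh ≠ 0 := by
    intro h0
    set D : ℝ := ‖T τ ψ‖ with hDdef
    set K : ℝ := ∫ t, ‖Φ (T τ ψ) t‖ ∂μ with hKdef
    have hK0 : 0 ≤ K := integral_nonneg fun t => norm_nonneg _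
    have hDpos : 0 < D := lt_trans hr hD
    set ε : ℝ := D * (D - r) / (K ^ 2 + 1) with hεdef
    have hεpos : 0 < ε := div_pos (mul_pos hDpos (by linarith)) (by positivity)
    have hε1 : ε * (K ^ 2 + 1) = D * (D - r) := by
      rw [hεdef]; field_simp
    have hJξ : Jfun T B r ψ τ (-(ε • T τ ψ))
        = (1 / 2) * (ε * K) ^ 2 - ε * (D * D) + r * (ε * D) := by
      rw [hJ]
      have hΦneg : ∀ t : ℝ, ‖Φ (-(ε • T τ ψ)) t‖ = ε * ‖Φ (T τ ψ) t‖ := by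
        intro t
        have h1 : Φ (-(ε • T τ ψ)) t = -(ε • Φ (T τ ψ) t) := by
          simp only [hΦ]; simp
        rw [h1, norm_neg, norm_smul, Real.norm_eq_abs, abs_of_nonneg hεpos.le]
      have h2 : ∫ t, ‖Φ (-(ε • T τ ψ)) t‖ ∂μ = ε * K := by
        rw [hKdef, ← integral_const_mul]
        exact integral_congr_ae (Eventually.of_forall fun t => hΦneg t)
      rw [h2, inner_neg_right, real_inner_smul_right, real_inner_self_eq_norm_mul_norm,
        norm_neg, norm_smul, Real.norm_eq_abs, abs_of_nonneg hεpos.le]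
      rw [← hDdef]
      ring
    have hneg : Jfun T B r ψ τ (-(ε • T τ ψ)) < 0 := by
      rw [hJξ]
      nlinarith [mul_pos hεpos (mul_pos hDpos (sub_pos.2 hD)), mul_pos hεpos hεpos,
        sq_nonneg K, mul_pos hεpos hDpos]
    have hle := hηh (-(ε • T τ ψ))
    rw [h0, hJ0] at hle
    linarith
  -- Φ ηh is a.e. nonvanishing
  have haene : ∀ᵐ t ∂μ, Φ ηh t ≠ 0 := by
    rw [ae_iff]
    by_contra hne
    have hset : {t : ℝ | ¬Φ ηh t ≠ 0} = (fun t => ‖Φ ηh t‖) ⁻¹' {0} := by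
      ext t; simp [norm_eq_zero]
    have hmeas : MeasurableSet {t : ℝ | ¬Φ ηh t ≠ 0} := by
      rw [hset]
      exact (hsm ηh).norm.measurable (measurableSet_singleton 0)
    have hpos : 0 < volume ({t : ℝ | ¬Φ ηh t ≠ 0} ∩ Set.Ioc 0 τ) := by
      rw [hμ, Measure.restrict_apply hmeas] at hne
      exact pos_iff_ne_zero.2 hne
    set S : Set ℝ := (fun t' => τ - t') ⁻¹' ({t : ℝ | ¬Φ ηh t ≠ 0} ∩ Set.Ioc 0 τ) with hSdef
    have hSmeas : MeasurableSet S :=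
      (measurable_const.sub measurable_id) (hmeas.inter measurableSet_Ioc)
    have hmp : MeasurePreserving (fun t' : ℝ => τ - t') volume volume :=
      Measure.measurePreserving_sub_left volume τ
    have hSvol : 0 < volume S := by
      rw [hSdef, hmp.measure_preimage (hmeas.inter measurableSet_Ioc).nullMeasurableSet]
      exact hpos
    apply hηne
    apply hUC ηh S hSmeas hSvol
    intro t' ht'
    obtain ⟨ht1, _⟩ := ht'
    have h0 : Φ ηh (τ - t') = 0 := not_not.1 ht1
    simp only [hΦ] at h0
    have heq : τ - (τ - t') = t' := by ring
    rwa [heq] at h0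
  have hN0 : 0 ≤ N := by
    rw [hN]

    exact integral_nonneg fun t => norm_nonneg _
  have hNμ : N = ∫ t, ‖Φ ηh t‖ ∂μ := by simp only [hΦ, hμ]; exact hN
  have hNpos : 0 < N := by
    rcases hN0.lt_or_eq with h | h
    · exact h
    exfalso
    have hzero : (fun t => ‖Φ ηh t‖) =ᵐ[μ] 0 :=
      (integral_eq_zero_iff_of_nonneg_ae (Eventually.of_forall fun t => norm_nonneg _)
        (hΦint ηh)).1 (by rw [← hNμ, ← h])
    have hμne : μ ≠ 0 := by
      intro h0
      have h1 : μ (Set.Ioc 0 τ) = 0 := by rw [h0]; simp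
      rw [hμ, Measure.restrict_apply measurableSet_Ioc, Set.inter_self, Real.volume_Ioc] at h1
      simp only [ENNReal.ofReal_eq_zero] at h1
      linarith
    haveI : (ae μ).NeBot := ae_neBot.2 hμne
    obtain ⟨t, h1, h2⟩ := (hzero.and haene).exists
    simp only [Pi.zero_apply, norm_eq_zero] at h1
    exact h2 h1
  -- Part 1 : a.e. norm equality
  have part1 : ∀ᵐ t ∂(volume.restrict (Set.Ioo 0 τ)), ‖fh t‖ = N := by
    rw [hres]
    filter_upwards [haene] with t ht
    rw [hfh' t, norm_smul, norm_smul, norm_inv, norm_norm, Real.norm_eq_abs,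
      abs_of_nonneg hN0, inv_mul_cancel₀ (norm_ne_zero_iff.2 ht), mul_one]
  -- Euler–Lagrange equation
  have hEL : ∀ ξ : X,
      N * (∫ t, ⟪‖Φ ηh t‖⁻¹ • Φ ηh t, Φ ξ t⟫ ∂μ) + ⟪T τ ψ, ξ⟫
        + r * ⟪‖ηh‖⁻¹ • ηh, ξ⟫ = 0 := by
    intro ξ
    have hF'meas : AEStronglyMeasurable (fun t => ⟪‖Φ ηh t‖⁻¹ • Φ ηh t, Φ ξ t⟫) μ :=
      AEStronglyMeasurable.inner
        ((((hsm ηh).norm.measurable.inv.stronglyMeasurable).smul (hsm ηh)).aestronglyMeasurable)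
        (hsm ξ).aestronglyMeasurable
    have hF_meas : ∀ᶠ s in nhds (0 : ℝ),
        AEStronglyMeasurable (fun t => ‖Φ ηh t + s • Φ ξ t‖) μ :=
      Eventually.of_forall fun s =>
        (((hsm ηh).add ((hsm ξ).const_smul s)).norm).aestronglyMeasurable
    have hF_int : Integrable (fun t => ‖Φ ηh t + (0 : ℝ) • Φ ξ t‖) μ := by
      simpa using hΦint ηh
    have h_lip : ∀ᵐ t ∂μ, LipschitzOnWith (Real.nnabs ‖Φ ξ t‖)
        (fun s : ℝ => ‖Φ ηh t + s • Φ ξ t‖) (Metric.ball (0 : ℝ) 1) := by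
      apply Eventually.of_forall
      intro t
      apply LipschitzWith.lipschitzOnWith
      apply LipschitzWith.of_dist_le_mul
      intro s s'
      rw [Real.dist_eq, Real.dist_eq]
      have hdiff : (Φ ηh t + s • Φ ξ t) - (Φ ηh t + s' • Φ ξ t) = (s - s') • Φ ξ t := by
        rw [sub_smul]; abel
      calc |‖Φ ηh t + s • Φ ξ t‖ - ‖Φ ηh t + s' • Φ ξ t‖|
          ≤ ‖(Φ ηh t + s • Φ ξ t) - (Φ ηh t + s' • Φ ξ t)‖ := abs_norm_sub_norm_le _ _
        _ = |s - s'| * ‖Φ ξ t‖ := by rw [hdiff, norm_smul, Real.norm_eq_abs]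
        _ = ↑(Real.nnabs ‖Φ ξ t‖) * |s - s'| := by
            rw [Real.coe_nnabs, abs_norm]; ring
    have h_diff : ∀ᵐ t ∂μ, HasDerivAt (fun s : ℝ => ‖Φ ηh t + s • Φ ξ t‖)
        (⟪‖Φ ηh t‖⁻¹ • Φ ηh t, Φ ξ t⟫) 0 := by
      filter_upwards [haene] with t ht
      exact hasDerivAt_norm_add_smul _ _ ht
    obtain ⟨-, hder⟩ := hasDerivAt_integral_of_dominated_loc_of_lip (μ := μ)
      (F := fun (s : ℝ) (t : ℝ) => ‖Φ ηh t + s • Φ ξ t‖) (Metric.ball_mem_nhds 0 one_pos) hF_meas hF_int hF'meas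
      h_lip (hΦint ξ) h_diff
    have hA : HasDerivAt (fun s : ℝ => ∫ t, ‖Φ (ηh + s • ξ) t‖ ∂μ)
        (∫ t, ⟪‖Φ ηh t‖⁻¹ • Φ ηh t, Φ ξ t⟫ ∂μ) 0 := by
      have heq : (fun s : ℝ => ∫ t, ‖Φ ηh t + s • Φ ξ t‖ ∂μ)
          = fun s : ℝ => ∫ t, ‖Φ (ηh + s • ξ) t‖ ∂μ := by
        funext s
        congr 1
        funext t
        rw [hΦadd, hΦsmul]
      rwa [heq] at hder
    set I : ℝ := ∫ t, ⟪‖Φ ηh t‖⁻¹ • Φ ηh t, Φ ξ t⟫ ∂μ with hI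
    have hA0 : ∫ t, ‖Φ (ηh + (0 : ℝ) • ξ) t‖ ∂μ = N := by
      simp only [zero_smul, add_zero]
      exact hNμ.symm
    have h1 : HasDerivAt (fun s : ℝ => (1 / 2) * (∫ t, ‖Φ (ηh + s • ξ) t‖ ∂μ) ^ 2)
        (N * I) 0 := by
      have h := (hA.pow 2).const_mul (1 / 2 : ℝ)
      refine h.congr_deriv ?_
      rw [hA0]
      ring
    have h2 : HasDerivAt (fun s : ℝ => ⟪T τ ψ, ηh + s • ξ⟫) ⟪T τ ψ, ξ⟫ 0 := by
      have heq : (fun s : ℝ => ⟪T τ ψ, ηh + s • ξ⟫)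
          = fun s : ℝ => ⟪T τ ψ, ηh⟫ + s * ⟪T τ ψ, ξ⟫ := by
        funext s; rw [inner_add_right, real_inner_smul_right]
      rw [heq]
      exact ((hasDerivAt_const (0 : ℝ) (⟪T τ ψ, ηh⟫ : ℝ)).add
        ((hasDerivAt_id (0 : ℝ)).mul_const (⟪T τ ψ, ξ⟫ : ℝ))).congr_deriv (by simp)
    have h3 : HasDerivAt (fun s : ℝ => r * ‖ηh + s • ξ‖) (r * ⟪‖ηh‖⁻¹ • ηh, ξ⟫) 0 :=
      (hasDerivAt_norm_add_smul ηh ξ hηne).const_mul r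
    have hj : HasDerivAt (fun s : ℝ => Jfun T B r ψ τ (ηh + s • ξ))
        (N * I + ⟪T τ ψ, ξ⟫ + r * ⟪‖ηh‖⁻¹ • ηh, ξ⟫) 0 := by
      have heq : (fun s : ℝ => Jfun T B r ψ τ (ηh + s • ξ))
          = fun s : ℝ => (1 / 2) * (∫ t, ‖Φ (ηh + s • ξ) t‖ ∂μ) ^ 2
            + ⟪T τ ψ, ηh + s • ξ⟫ + r * ‖ηh + s • ξ‖ := by
        funext s; rw [hJ]
      rw [heq]
      exact (h1.add h2).add h3
    have hmin : IsLocalMin (fun s : ℝ => Jfun T B r ψ τ (ηh + s • ξ)) 0 :=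
      Eventually.of_forall fun s => by simpa using hηh (ηh + s • ξ)
    exact hmin.hasDerivAt_eq_zero hj
  -- key identity
  have hkey : N * N + ⟪T τ ψ, ηh⟫ + r * ‖ηh‖ = 0 := by
    have hIη : ∫ t, ⟪‖Φ ηh t‖⁻¹ • Φ ηh t, Φ ηh t⟫ ∂μ = N := by
      rw [hNμ]
      apply integral_congr_ae
      filter_upwards [haene] with t ht
      rw [real_inner_smul_left, real_inner_self_eq_norm_mul_norm, ← mul_assoc,
        inv_mul_cancel₀ (norm_ne_zero_iff.2 ht), one_mul]
    have hnorm : (⟪‖ηh‖⁻¹ • ηh, ηh⟫ : ℝ) = ‖ηh‖ := by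
      rw [real_inner_smul_left, real_inner_self_eq_norm_mul_norm, ← mul_assoc,
        inv_mul_cancel₀ (norm_ne_zero_iff.2 hηne), one_mul]
    have h := hEL ηh
    rw [hIη, hnorm] at h
    exact h
  -- integrability of controlled trajectories
  have hint_g : ∀ g : ℝ → U, ∀ C : ℝ, AEStronglyMeasurable g μ → (∀ᵐ t ∂μ, ‖g t‖ ≤ C) →
      Integrable (fun t => T (τ - t) (B (g t))) μ := by
    intro g C hgm hgb
    have hcont : Continuous fun p : ℝ × U => T (τ - p.1) (B p.2) :=
      (sg_cont2 T hTcont).comp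
        ((continuous_const.sub continuous_fst).prodMk (B.continuous.comp continuous_snd))
    have hmeas : AEStronglyMeasurable (fun t => T (τ - t) (B (g t))) μ :=
      hcont.comp_aestronglyMeasurable (aestronglyMeasurable_id.prodMk hgm)
    have hmem' : ∀ᵐ t ∂μ, t ∈ Set.Ioc (0 : ℝ) τ := by
      rw [hμ]; exact ae_restrict_mem measurableSet_Ioc
    apply Integrable.mono' (hconst_int (M * (‖B‖ * C))) hmeas
    filter_upwards [hgb, hmem'] with t htb htm
    calc ‖T (τ - t) (B (g t))‖ ≤ ‖T (τ - t)‖ * ‖B (g t)‖ := ContinuousLinearMap.le_opNorm _ _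
      _ ≤ M * (‖B‖ * C) := by
          apply mul_le_mul (hM _ ⟨by linarith [htm.2], by linarith [htm.1]⟩)
            ?_ (norm_nonneg _) hM0
          calc ‖B (g t)‖ ≤ ‖B‖ * ‖g t‖ := ContinuousLinearMap.le_opNorm _ _
            _ ≤ ‖B‖ * C := mul_le_mul_of_nonneg_left htb (norm_nonneg _)
  -- fh basic facts
  have hfhsm : StronglyMeasurable fh := by
    have : fh = fun t => N • (‖Φ ηh t‖⁻¹ • Φ ηh t) := funext hfh'
    rw [this]
    exact (((hsm ηh).norm.measurable.inv.stronglyMeasurable.smul (hsm ηh)).const_smul N)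
  have hfhbd : ∀ t : ℝ, ‖fh t‖ ≤ N := by
    intro t
    rcases eq_or_ne (Φ ηh t) 0 with h0 | h0
    · rw [hfh' t, h0]
      simpa using hN0
    · rw [hfh' t, norm_smul, norm_smul, norm_inv, norm_norm, Real.norm_eq_abs,
        abs_of_nonneg hN0, inv_mul_cancel₀ (norm_ne_zero_iff.2 h0), mul_one]
  -- Part 2 : trajectory reaches the ball
  have hwint : Integrable (fun t => T (τ - t) (B (fh t))) μ :=
    hint_g fh N hfhsm.aestronglyMeasurable (Eventually.of_forall hfhbd)
  have hinner_traj : ∀ (g : ℝ → U), Integrable (fun t => T (τ - t) (B (g t))) μ →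
      ∀ ξ : X, ⟪traj T B ψ g τ, ξ⟫ = ⟪T τ ψ, ξ⟫ + ∫ t, ⟪g t, Φ ξ t⟫ ∂μ := by
    intro g hgint ξ
    have htraj_eq : traj T B ψ g τ = T τ ψ + ∫ t, T (τ - t) (B (g t)) ∂μ := by
      rw [traj, hμ]
    rw [htraj_eq, inner_add_left]
    congr 1
    have h1 : (fun t => ⟪ξ, T (τ - t) (B (g t))⟫) = fun t => ⟪g t, Φ ξ t⟫ := by
      funext t
      simp only [hΦ]
      rw [ContinuousLinearMap.adjoint_inner_right, ContinuousLinearMap.adjoint_inner_right,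
        real_inner_comm]
    rw [real_inner_comm, ← integral_inner hgint ξ, ← h1]
  have part2 : traj T B ψ fh τ ∈ Metric.closedBall (0 : X) r := by
    have heqv : traj T B ψ fh τ = -(r • (‖ηh‖⁻¹ • ηh)) := by
      apply ext_inner_right ℝ
      intro ξ
      rw [hinner_traj fh hwint ξ]
      have h2 : ∫ t, ⟪fh t, Φ ξ t⟫ ∂μ = N * ∫ t, ⟪‖Φ ηh t‖⁻¹ • Φ ηh t, Φ ξ t⟫ ∂μ := by
        rw [← integral_const_mul]
        apply integral_congr_ae
        apply Eventually.of_forall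
        intro t
        show (⟪fh t, Φ ξ t⟫ : ℝ) = N * ⟪‖Φ ηh t‖⁻¹ • Φ ηh t, Φ ξ t⟫
        rw [hfh' t, real_inner_smul_left]
      rw [h2, inner_neg_left, real_inner_smul_left]
      have h3 := hEL ξ
      linarith
    rw [heqv, Metric.mem_closedBall, dist_zero_right, norm_neg, norm_smul, norm_smul,
      norm_inv, norm_norm, Real.norm_eq_abs, abs_of_nonneg hr.le,
      inv_mul_cancel₀ (norm_ne_zero_iff.2 hηne), mul_one]
  refine ⟨part1, part2, ?_⟩
  -- Part 3 : optimality
  intro g C hC hgm hgb htraj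
  rw [hres] at hgm hgb
  have hgint := hint_g g C hgm hgb
  have hip := hinner_traj g hgint ηh
  have hinner_meas : AEStronglyMeasurable (fun t => (⟪g t, Φ ηh t⟫ : ℝ)) μ :=
    AEStronglyMeasurable.inner hgm (hsm ηh).aestronglyMeasurable
  have hinner_int : Integrable (fun t => (⟪g t, Φ ηh t⟫ : ℝ)) μ := by
    apply Integrable.mono' ((hΦint ηh).const_mul C) hinner_meas
    filter_upwards [hgb] with t ht
    rw [Real.norm_eq_abs]
    calc |(⟪g t, Φ ηh t⟫ : ℝ)| ≤ ‖g t‖ * ‖Φ ηh t‖ := abs_real_inner_le_norm _ _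
      _ ≤ C * ‖Φ ηh t‖ := mul_le_mul_of_nonneg_right ht (norm_nonneg _)
  have h1 : ∫ t, (⟪g t, Φ ηh t⟫ : ℝ) ∂μ ≤ C * N := by
    rw [hNμ, ← integral_const_mul]
    apply integral_mono_ae hinner_int ((hΦint ηh).const_mul C)
    filter_upwards [hgb] with t ht
    calc (⟪g t, Φ ηh t⟫ : ℝ) ≤ ‖g t‖ * ‖Φ ηh t‖ := real_inner_le_norm _ _
      _ ≤ C * ‖Φ ηh t‖ := mul_le_mul_of_nonneg_right ht (norm_nonneg _)
  have h2 : -(r * ‖ηh‖) ≤ ⟪traj T B ψ g τ, ηh⟫ := by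
    have habs : |(⟪traj T B ψ g τ, ηh⟫ : ℝ)| ≤ r * ‖ηh‖ := by
      calc |(⟪traj T B ψ g τ, ηh⟫ : ℝ)| ≤ ‖traj T B ψ g τ‖ * ‖ηh‖ :=
            abs_real_inner_le_norm _ _
        _ ≤ r * ‖ηh‖ := by
            apply mul_le_mul_of_nonneg_right _ (norm_nonneg _)
            exact mem_closedBall_zero_iff.1 htraj
    linarith [neg_abs_le (⟪traj T B ψ g τ, ηh⟫ : ℝ)]
  have hNN : N * N ≤ C * N := by linarith
  exact le_of_mul_le_mul_right hNN hNpos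
end

section
/- (Strict monotonicity of the minimal norm function.) Assume -A generates a contraction semigroup T and the L¹ observability inequality K(τ)∫_0^τ ||B*T*_tη||_U dt ≥ ||T*_τη|| holds for all η ∈ X and τ > 0, with K continuous on (0,∞). Let τ̂ = inf{t : ||T_tψ|| ≤ r} (possibly +∞) with ψ ∉ B(0,r). Then the minimal norm map τ ↦ N*(τ) is strictly decreasing on (0, τ̂). -/
open MeasureTheory Filter
open Topology


set_option linter.unusedSectionVars false
set_option linter.unusedVariables false
set_option maxHeartbeats 1000000


/-- Running maximum of a countable family of functions. -/
def auxF (ψ : ℕ → ℝ → ℝ) : ℕ → ℝ → ℝ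
  | 0 => ψ 0
  | (N+1) => fun t => max (auxF ψ N t) (ψ (N+1) t)

lemma auxF_cont {ψ : ℕ → ℝ → ℝ} (h : ∀ n, Continuous (ψ n)) : ∀ N, Continuous (auxF ψ N)
  | 0 => h 0
  | (N+1) => (auxF_cont h N).max (h (N+1))

lemma auxF_succ (ψ : ℕ → ℝ → ℝ) (N : ℕ) (t : ℝ) :
    auxF ψ (N+1) t = max (auxF ψ N t) (ψ (N+1) t) := rfl

lemma auxF_mono (ψ : ℕ → ℝ → ℝ) (t : ℝ) : Monotone fun N => auxF ψ N t :=
  monotone_nat_of_le_succ fun N => le_max_left _ _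

lemma auxF_le {ψ : ℕ → ℝ → ℝ} {M : ℝ → ℝ} (h : ∀ n t, ψ n t ≤ M t) :
    ∀ N t, auxF ψ N t ≤ M t
  | 0, t => h 0 t
  | (N+1), t => max_le (auxF_le h N t) (h (N+1) t)

lemma auxF_ge (ψ : ℕ → ℝ → ℝ) : ∀ N n, n ≤ N → ∀ t, ψ n t ≤ auxF ψ N t := by
  intro N
  induction N with
  | zero => intro n hn t; interval_cases n; exact le_rfl
  | succ N ih =>
    intro n hn t
    rcases Nat.lt_or_ge n (N+1) with h | h
    · exact (ih n (Nat.lt_succ_iff.1 h) t).trans (le_max_left _ _)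
    · have : n = N + 1 := le_antisymm hn h
      subst this; exact le_max_right _ _

lemma auxF_max (ψ : ℕ → ℝ → ℝ) : ∀ N t, ∃ n, n ≤ N ∧ auxF ψ N t = ψ n t := by
  intro N
  induction N with
  | zero => intro t; exact ⟨0, le_rfl, rfl⟩
  | succ N ih =>
    intro t
    rcases le_total (auxF ψ N t) (ψ (N+1) t) with h | h
    · exact ⟨N+1, le_rfl, max_eq_right h⟩
    · obtain ⟨n, hn, hn'⟩ := ih t
      exact ⟨n, hn.trans (Nat.le_succ _), (max_eq_left h).trans hn'⟩


section Aux
variable {X U : Type*} [NormedAddCommGroup X] [InnerProductSpace ℝ X] [CompleteSpace X]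
    [NormedAddCommGroup U] [InnerProductSpace ℝ U] [CompleteSpace U]

lemma aux_jointCont (T : ℝ → X →L[ℝ] X) (hTcont : ∀ x : X, Continuous fun t => T t x)
    (hTcontr : ∀ t : ℝ, 0 ≤ t → ‖T t‖ ≤ 1) :
    Continuous fun p : ℝ × X => T (max p.1 0) p.2 := by
  rw [continuous_iff_continuousAt]
  rintro ⟨t₀, x₀⟩
  have h1 : Tendsto (fun p : ℝ × X => T (max p.1 0) (p.2 - x₀)) (𝓝 (t₀, x₀)) (𝓝 0) := by
    apply squeeze_zero_norm (a := fun p : ℝ × X => ‖p.2 - x₀‖)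
    · intro p
      calc ‖T (max p.1 0) (p.2 - x₀)‖ ≤ ‖T (max p.1 0)‖ * ‖p.2 - x₀‖ := (T _).le_opNorm _
        _ ≤ 1 * ‖p.2 - x₀‖ :=
            mul_le_mul_of_nonneg_right (hTcontr _ (le_max_right _ _)) (norm_nonneg _)
        _ = ‖p.2 - x₀‖ := one_mul _
    · have : Continuous fun p : ℝ × X => ‖p.2 - x₀‖ := (continuous_snd.sub continuous_const).norm
      simpa using this.tendsto (t₀, x₀)
  have h2 : Tendsto (fun p : ℝ × X => T (max p.1 0) x₀) (𝓝 (t₀, x₀)) (𝓝 (T (max t₀ 0) x₀)) :=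
    ((hTcont x₀).comp (continuous_fst.max continuous_const)).tendsto _
  have h3 := h1.add h2
  have heq : (fun p : ℝ × X => T (max p.1 0) p.2)
      = fun p : ℝ × X => T (max p.1 0) (p.2 - x₀) + T (max p.1 0) x₀ := by
    funext p; rw [← map_add]; congr 1; abel
  rw [ContinuousAt, heq]
  simpa using h3

lemma aux_SM (T : ℝ → X →L[ℝ] X) (B : U →L[ℝ] X)
    (hTcont : ∀ x : X, Continuous fun t => T t x)
    (hTcontr : ∀ t : ℝ, 0 ≤ t → ‖T t‖ ≤ 1) (τ : ℝ) {f : ℝ → U}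
    (hf : StronglyMeasurable f) :
    StronglyMeasurable fun σ => T (max (τ - σ) 0) (B (f σ)) :=
  (aux_jointCont T hTcont hTcontr).comp_stronglyMeasurable
    (((continuous_const.sub continuous_id).stronglyMeasurable).prodMk
      (B.continuous.comp_stronglyMeasurable hf))

lemma aux_int (T : ℝ → X →L[ℝ] X) (B : U →L[ℝ] X)
    (hTcont : ∀ x : X, Continuous fun t => T t x)
    (hTcontr : ∀ t : ℝ, 0 ≤ t → ‖T t‖ ≤ 1) {τ a b C₀ : ℝ} {f : ℝ → U}
    (hf : StronglyMeasurable f) (hbτ : b ≤ τ)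
    (hbd : ∀ᵐ σ ∂volume.restrict (Set.Ioc a b), ‖f σ‖ ≤ C₀) :
    IntegrableOn (fun σ => T (τ - σ) (B (f σ))) (Set.Ioc a b) := by
  have hsm := aux_SM T B hTcont hTcontr τ hf
  have hmem := ae_restrict_mem (μ := volume) (s := Set.Ioc a b) measurableSet_Ioc
  have heq : ∀ᵐ σ ∂volume.restrict (Set.Ioc a b),
      T (max (τ - σ) 0) (B (f σ)) = T (τ - σ) (B (f σ)) := by
    filter_upwards [hmem] with σ hσ
    rw [max_eq_left (by linarith [hσ.2] : (0:ℝ) ≤ τ - σ)]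
  have hint : IntegrableOn (fun σ => T (max (τ - σ) 0) (B (f σ))) (Set.Ioc a b) := by
    refine Integrable.mono' (g := fun _ => ‖B‖ * C₀) ?_ hsm.aestronglyMeasurable ?_
    · exact integrableOn_const measure_Ioc_lt_top.ne enorm_ne_top
    · filter_upwards [hbd] with σ hσ
      calc ‖T (max (τ - σ) 0) (B (f σ))‖ ≤ ‖T (max (τ - σ) 0)‖ * ‖B (f σ)‖ := (T _).le_opNorm _
        _ ≤ 1 * ‖B (f σ)‖ :=
            mul_le_mul_of_nonneg_right (hTcontr _ (le_max_right _ _)) (norm_nonneg _)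
        _ = ‖B (f σ)‖ := one_mul _
        _ ≤ ‖B‖ * ‖f σ‖ := B.le_opNorm _
        _ ≤ ‖B‖ * C₀ := mul_le_mul_of_nonneg_left hσ (norm_nonneg _)
  exact hint.congr heq




/-- The `L¹`-norm of a weakly continuous `φ` is approached by pairing with countably many
unit vectors: the key norm-realization family. -/
lemma aux_normfam (T : ℝ → X →L[ℝ] X) (B : U →L[ℝ] X)
    (hTcont : ∀ x : X, Continuous fun t => T t x)
    {s : ℝ} (hs : 0 < s) (η : X) :
    ∃ v : ℕ → U, (∀ n, ‖v n‖ ≤ 1) ∧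
      (∀ t ∈ Set.Icc 0 s, ∀ bb : ℝ,
        (∀ n, (inner ℝ (B.adjoint ((T t).adjoint η)) (v n) : ℝ) ≤ bb) →
        ‖B.adjoint ((T t).adjoint η)‖ ≤ bb) := by
  classical
  set φ : ℝ → U := fun t => B.adjoint ((T t).adjoint η) with hφ
  have hφcont : ∀ v : U, Continuous fun t => (inner ℝ (φ t) v : ℝ) := by
    intro v
    have h : ∀ t, (inner ℝ (φ t) v : ℝ) = (inner ℝ η (T t (B v)) : ℝ) := by
      intro t
      rw [hφ]
      rw [ContinuousLinearMap.adjoint_inner_left, ContinuousLinearMap.adjoint_inner_left]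
    simp_rw [h]
    exact continuous_const.inner (hTcont (B v))
  set Q : Set ℝ := Set.Icc 0 s ∩ Set.range ((↑) : ℚ → ℝ) with hQdef
  have hQcount : (φ '' Q).Countable :=
    ((Set.countable_range _).mono Set.inter_subset_right).image φ
  set Ssub : Submodule ℝ U := (Submodule.span ℝ (φ '' Q)).topologicalClosure with hSsub
  have hQdense : Set.Icc 0 s ⊆ closure Q := by
    have h1 : Set.Ioo 0 s ⊆ closure (Set.Ioo 0 s ∩ Set.range ((↑) : ℚ → ℝ)) :=
      Rat.denseRange_cast.open_subset_closure_inter isOpen_Ioo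
    calc Set.Icc 0 s = closure (Set.Ioo 0 s) := (closure_Ioo hs.ne).symm
      _ ⊆ closure (closure (Set.Ioo 0 s ∩ Set.range ((↑) : ℚ → ℝ))) := closure_mono h1
      _ = closure (Set.Ioo 0 s ∩ Set.range ((↑) : ℚ → ℝ)) := closure_closure
      _ ⊆ closure Q := closure_mono (Set.inter_subset_inter_left _ Set.Ioo_subset_Icc_self)
  have hmemS : ∀ t ∈ Set.Icc 0 s, φ t ∈ Ssub := by
    intro t ht
    by_contra hts
    obtain ⟨F, u, hF1, hF2⟩ := geometric_hahn_banach_closed_point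
      Ssub.convex (Submodule.isClosed_topologicalClosure _) hts
    have hF0 : ∀ y ∈ Ssub, F y = 0 := by
      intro y hy
      by_contra hFy
      have hm : ∀ m : ℝ, m * F y < u := by
        intro m
        have hmy : (m • y) ∈ Ssub := Ssub.smul_mem m hy
        simpa using hF1 _ hmy
      have := hm ((u + 1)/F y)
      rw [div_mul_cancel₀ _ hFy] at this
      linarith
    have hu0 : 0 < u := by simpa using hF1 0 (zero_mem _)
    have hGQ : Set.EqOn (fun t' => F (φ t')) 0 Q := by
      intro q hq
      have : φ q ∈ Ssub :=
        (Submodule.le_topologicalClosure _) (Submodule.subset_span ⟨q, hq, rfl⟩)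
      simpa using hF0 _ this
    have hGcont : Continuous fun t' => F (φ t') := by
      set vF := (InnerProductSpace.toDual ℝ U).symm F with hvF
      have : ∀ t', F (φ t') = (inner ℝ (φ t') vF : ℝ) := by
        intro t'
        rw [real_inner_comm]
        exact (InnerProductSpace.toDual_symm_apply).symm
      simp_rw [this]
      exact hφcont vF
    have := (hGQ.closure hGcont continuous_const) (hQdense ht)
    simp only [Pi.zero_apply] at this
    rw [this] at hF2
    linarith
  -- separability
  have hsep : TopologicalSpace.IsSeparable (Ssub : Set U) := by
    rw [hSsub, Submodule.topologicalClosure_coe]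
    exact (hQcount.isSeparable.span).closure
  obtain ⟨cs, hcs_count, hcs_sub⟩ := hsep
  have hne : (insert (0:U) cs).Nonempty := ⟨0, Set.mem_insert _ _⟩
  obtain ⟨d, hd⟩ := (hcs_count.insert 0).exists_eq_range hne
  refine ⟨fun n => if h : d n = 0 then 0 else ‖d n‖⁻¹ • d n, ?_, ?_⟩
  · intro n
    by_cases h : d n = 0
    · simp [h]
    · simp only [h, dif_neg, not_false_iff]
      rw [norm_smul, norm_inv, norm_norm, inv_mul_cancel₀ (norm_ne_zero_iff.2 h)]
  · intro t ht bb hbb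
    set y := φ t with hy
    by_contra hlt
    push_neg at hlt
    have hyS : y ∈ closure (Set.range d) := by
      have h1 : y ∈ (Ssub : Set U) := hmemS t ht
      have h2 : (Ssub : Set U) ⊆ closure (Set.range d) := by
        rw [← hd]
        exact hcs_sub.trans (closure_mono (Set.subset_insert _ _))
      exact h2 h1
    have hbb0 : 0 ≤ bb := by
      have h0 : (0:U) ∈ Set.range d := by rw [← hd]; exact Set.mem_insert _ _
      obtain ⟨n₀, hn₀⟩ := h0
      have h9 := hbb n₀
      simp only [hn₀, dif_pos, inner_zero_right] at h9
      exact h9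
    have hy0 : 0 < ‖y‖ := lt_of_le_of_lt hbb0 hlt
    set ε := min ((‖y‖ - bb)/3) (‖y‖/2) with hε
    have hε0 : 0 < ε := lt_min (by linarith) (by linarith)
    obtain ⟨z, hz_mem, hz_dist⟩ := Metric.mem_closure_iff.1 hyS ε hε0
    obtain ⟨n, rfl⟩ := hz_mem
    have hz : ‖y - d n‖ < ε := by rwa [dist_eq_norm] at hz_dist
    have hεy : ε ≤ ‖y‖/2 := min_le_right _ _
    have hε3 : ε ≤ (‖y‖ - bb)/3 := min_le_left _ _
    have hzn : 0 < ‖d n‖ := by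
      have : ‖y‖ - ‖y - d n‖ ≤ ‖d n‖ := by
        have := norm_sub_norm_le y (d n)
        linarith [norm_sub_rev y (d n) ▸ this]
      linarith
    have hdn0 : d n ≠ 0 := norm_pos_iff.1 hzn
    have hinner : (inner ℝ y (d n) : ℝ) ≥ ‖y‖ * ‖y‖ - ‖y‖ * ε := by
      have h1 : (inner ℝ y (d n) : ℝ) = (inner ℝ y y : ℝ) - (inner ℝ y (y - d n) : ℝ) := by
        rw [inner_sub_right]; ring
      have h2 : |(inner ℝ y (y - d n) : ℝ)| ≤ ‖y‖ * ‖y - d n‖ := abs_real_inner_le_norm _ _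
      have h3 : (inner ℝ y y : ℝ) = ‖y‖ * ‖y‖ := real_inner_self_eq_norm_mul_norm y
      have h4 : ‖y‖ * ‖y - d n‖ ≤ ‖y‖ * ε :=
        mul_le_mul_of_nonneg_left hz.le (norm_nonneg _)
      have := abs_le.1 h2
      rw [h1, h3]
      linarith [this.2]
    have hzle : ‖d n‖ ≤ ‖y‖ + ε := by
      have := norm_sub_norm_le (d n) y
      have h5 := norm_sub_rev y (d n)
      linarith [abs_le.1 (abs_norm_sub_norm_le (d n) y)]
    have hlow : (inner ℝ y (d n) : ℝ) ≥ (‖y‖ - 2*ε) * ‖d n‖ := by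
      nlinarith
    have hfin : (‖y‖ - 2*ε) ≤ (inner ℝ y (‖d n‖⁻¹ • d n) : ℝ) := by
      rw [real_inner_smul_right]
      have h6 : ‖d n‖⁻¹ * ((‖y‖ - 2*ε) * ‖d n‖) ≤ ‖d n‖⁻¹ * (inner ℝ y (d n) : ℝ) :=
        mul_le_mul_of_nonneg_left hlow (inv_nonneg.2 hzn.le)
      calc ‖y‖ - 2*ε = ‖d n‖⁻¹ * ((‖y‖ - 2*ε) * ‖d n‖) := by
            field_simp
        _ ≤ _ := h6
    have := hbb n
    simp only [hdn0, dif_neg, not_false_iff] at this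
    linarith

/-- Bang–bang type approximation: the pairing `⟪η, ∫ T(s-σ) B g(σ)⟫` of reachable points
comes arbitrarily close to `c ∫₀ˢ ‖B* T*_t η‖ dt` with controls bounded by `c`. -/
lemma aux_bang (T : ℝ → X →L[ℝ] X) (B : U →L[ℝ] X)
    (hTcont : ∀ x : X, Continuous fun t => T t x)
    (hTcontr : ∀ t : ℝ, 0 ≤ t → ‖T t‖ ≤ 1)
    {s : ℝ} (hs : 0 < s) (η : X) {c : ℝ} (hc : 0 ≤ c) {b : ℝ}
    (hb : b < c * ∫ t in Set.Ioc 0 s, ‖B.adjoint ((T t).adjoint η)‖) :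
    ∃ g : ℝ → U, StronglyMeasurable g ∧ (∀ σ, ‖g σ‖ ≤ c) ∧
      b < (inner ℝ η (∫ σ in Set.Ioc 0 s, T (s - σ) (B (g σ))) : ℝ) := by
  classical
  set φ : ℝ → U := fun t => B.adjoint ((T t).adjoint η) with hφ
  obtain ⟨v, hv1, hlub⟩ := aux_normfam T B hTcont hs η
  set ψ : ℕ → ℝ → ℝ := fun n t => (inner ℝ (φ t) (v n) : ℝ) with hψdef
  have hψeq : ∀ n t, ψ n t = (inner ℝ η (T t (B (v n))) : ℝ) := by
    intro n t
    show (inner ℝ (B.adjoint ((T t).adjoint η)) (v n) : ℝ) = _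
    rw [ContinuousLinearMap.adjoint_inner_left, ContinuousLinearMap.adjoint_inner_left]
  have hψcont : ∀ n, Continuous (ψ n) := by
    intro n
    have h : ψ n = fun t => (inner ℝ η (T t (B (v n))) : ℝ) := funext (hψeq n)
    rw [h]
    exact continuous_const.inner (hTcont (B (v n)))
  have hψle : ∀ n t, ψ n t ≤ ‖φ t‖ := by
    intro n t
    calc ψ n t ≤ ‖φ t‖ * ‖v n‖ := real_inner_le_norm _ _
      _ ≤ ‖φ t‖ * 1 := mul_le_mul_of_nonneg_left (hv1 n) (norm_nonneg _)
      _ = ‖φ t‖ := mul_one _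
  have hψabs : ∀ n t, |ψ n t| ≤ ‖φ t‖ := by
    intro n t
    calc |ψ n t| ≤ ‖φ t‖ * ‖v n‖ := abs_real_inner_le_norm _ _
      _ ≤ ‖φ t‖ * 1 := mul_le_mul_of_nonneg_left (hv1 n) (norm_nonneg _)
      _ = ‖φ t‖ := mul_one _
  have hFub : ∀ N t, auxF ψ N t ≤ ‖φ t‖ := auxF_le hψle
  have hFabs : ∀ N t, |auxF ψ N t| ≤ ‖φ t‖ := by
    intro N t
    obtain ⟨n, _, hn⟩ := auxF_max ψ N t
    rw [hn]; exact hψabs n t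
  have hFtend : ∀ t ∈ Set.Icc 0 s, Tendsto (fun N => auxF ψ N t) atTop (𝓝 ‖φ t‖) := by
    intro t ht
    refine tendsto_atTop_isLUB (auxF_mono ψ t) ⟨?_, ?_⟩
    · rintro _ ⟨N, rfl⟩; exact hFub N t
    · intro bb hbb
      refine hlub t ht bb fun n => ?_
      exact (auxF_ge ψ n n le_rfl t).trans (hbb ⟨n, rfl⟩)
  have hbound : ∀ t ∈ Set.Ioc 0 s, ‖φ t‖ ≤ ‖B.adjoint‖ * ‖η‖ := by
    intro t ht
    calc ‖φ t‖ ≤ ‖B.adjoint‖ * ‖(T t).adjoint η‖ := B.adjoint.le_opNorm _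
      _ ≤ ‖B.adjoint‖ * (‖(T t).adjoint‖ * ‖η‖) :=
        mul_le_mul_of_nonneg_left (((T t).adjoint).le_opNorm _) (norm_nonneg _)
      _ ≤ ‖B.adjoint‖ * (1 * ‖η‖) := by
        refine mul_le_mul_of_nonneg_left (mul_le_mul_of_nonneg_right ?_ (norm_nonneg _))
          (norm_nonneg _)
        rw [ContinuousLinearMap.adjoint.norm_map]
        exact hTcontr t ht.1.le
      _ = ‖B.adjoint‖ * ‖η‖ := by rw [one_mul]
  have hDCT : Tendsto (fun N => ∫ t in Set.Ioc 0 s, auxF ψ N t) atTop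
      (𝓝 (∫ t in Set.Ioc 0 s, ‖φ t‖)) := by
    refine tendsto_integral_of_dominated_convergence (fun _ => ‖B.adjoint‖ * ‖η‖)
      (fun N => ((auxF_cont hψcont N).aestronglyMeasurable)) ?_ ?_ ?_
    · exact integrableOn_const measure_Ioc_lt_top.ne enorm_ne_top
    · intro N
      filter_upwards [ae_restrict_mem measurableSet_Ioc] with t ht
      rw [Real.norm_eq_abs]
      exact (hFabs N t).trans (hbound t ht)
    · filter_upwards [ae_restrict_mem measurableSet_Ioc] with t ht
      exact hFtend t ⟨ht.1.le, ht.2⟩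
  obtain ⟨N, hN⟩ := ((tendsto_order.1 (hDCT.const_mul c)).1 b hb).exists
  -- measurable selection of the maximizing index
  have hex : ∀ t, ∃ n, n ≤ N ∧ auxF ψ N t = ψ n t := auxF_max ψ N
  set j : ℝ → ℕ := fun t => Nat.find (hex t) with hjdef
  have hj : ∀ t, j t ≤ N ∧ auxF ψ N t = ψ (j t) t := fun t => Nat.find_spec (hex t)
  have hjmeas : Measurable j := by
    refine measurable_to_countable' fun n => ?_
    have hset : {x | j x = n} = {x | (n ≤ N ∧ auxF ψ N x = ψ n x) ∧
        ∀ m, m < n → ¬(m ≤ N ∧ auxF ψ N x = ψ m x)} := by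
      ext x
      simp only [Set.mem_setOf_eq, hjdef, Nat.find_eq_iff (hex x)]
    have hmeq : ∀ k : ℕ, MeasurableSet {x : ℝ | auxF ψ N x = ψ k x} :=
      fun k => measurableSet_eq_fun (auxF_cont hψcont N).measurable (hψcont k).measurable
    have hpre : j ⁻¹' {n} = {x | j x = n} := by ext x; simp [Set.mem_preimage]
    rw [hpre, hset]
    have h1 : MeasurableSet {x : ℝ | n ≤ N ∧ auxF ψ N x = ψ n x} := by
      by_cases hn : n ≤ N
      · simp only [hn, true_and]; exact hmeq n
      · simp only [hn, false_and]; exact MeasurableSet.empty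
    have h2 : MeasurableSet {x : ℝ | ∀ m, m < n → ¬(m ≤ N ∧ auxF ψ N x = ψ m x)} := by
      have : {x : ℝ | ∀ m, m < n → ¬(m ≤ N ∧ auxF ψ N x = ψ m x)} =
          ⋂ m ∈ Finset.range n, {x : ℝ | ¬(m ≤ N ∧ auxF ψ N x = ψ m x)} := by
        ext x; simp [Finset.mem_range]
      rw [this]
      refine MeasurableSet.biInter (Set.to_countable _) fun m _ => ?_
      have : {x : ℝ | ¬(m ≤ N ∧ auxF ψ N x = ψ m x)} =
          {x : ℝ | m ≤ N ∧ auxF ψ N x = ψ m x}ᶜ := rfl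
      rw [this]
      refine MeasurableSet.compl ?_
      by_cases hm : m ≤ N
      · simp only [hm, true_and]; exact hmeq m
      · simp only [hm, false_and]; exact MeasurableSet.empty
    rw [Set.setOf_and]
    exact h1.inter h2
  set A : ℕ → Set ℝ := fun n => (fun σ => j (s - σ)) ⁻¹' {n} with hAdef
  have hA : ∀ n, MeasurableSet (A n) :=
    fun n => (hjmeas.comp (measurable_const.sub measurable_id)) (measurableSet_singleton n)
  set g : ℝ → U := fun σ => c • v (j (s - σ)) with hgdef
  have hgeq : g = fun σ => ∑ n ∈ Finset.range (N+1),
      (A n).indicator (fun _ => c • v n) σ := by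
    funext σ
    have hn₀ : j (s - σ) < N + 1 := Nat.lt_succ_of_le (hj (s - σ)).1
    rw [Finset.sum_eq_single (j (s - σ))]
    · rw [Set.indicator_of_mem (by simp [hAdef] : σ ∈ A (j (s - σ)))]
    · intro m _ hm
      refine Set.indicator_of_notMem ?_ _
      simp only [hAdef, Set.mem_preimage, Set.mem_singleton_iff]
      exact fun h => hm h.symm
    · intro h
      exact absurd (Finset.mem_range.2 hn₀) h
  have hgSM : StronglyMeasurable g := by
    rw [hgeq]
    refine Finset.stronglyMeasurable_fun_sum _ fun n _ => ?_
    exact stronglyMeasurable_const.indicator (hA n)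
  have hgb : ∀ σ, ‖g σ‖ ≤ c := by
    intro σ
    rw [hgdef]
    simp only
    rw [norm_smul, Real.norm_eq_abs, abs_of_nonneg hc]
    calc c * ‖v (j (s - σ))‖ ≤ c * 1 := mul_le_mul_of_nonneg_left (hv1 _) hc
      _ = c := mul_one c
  have hkey : ∀ σ, (inner ℝ η (T (s - σ) (B (g σ))) : ℝ) = c * auxF ψ N (s - σ) := by
    intro σ
    have h1 : g σ = c • v (j (s - σ)) := rfl
    rw [h1, ContinuousLinearMap.map_smul, ContinuousLinearMap.map_smul,
      real_inner_smul_right, ← hψeq, ← (hj (s - σ)).2]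
  have hgint : IntegrableOn (fun σ => T (s - σ) (B (g σ))) (Set.Ioc 0 s) :=
    aux_int T B hTcont hTcontr hgSM le_rfl (Eventually.of_forall hgb)
  have hpull : (inner ℝ η (∫ σ in Set.Ioc 0 s, T (s - σ) (B (g σ))) : ℝ)
      = ∫ σ in Set.Ioc 0 s, (inner ℝ η (T (s - σ) (B (g σ))) : ℝ) := by
    simp_rw [← innerSL_apply_apply (𝕜 := ℝ)]
    exact (ContinuousLinearMap.integral_comp_comm (innerSL ℝ η) hgint).symm
  refine ⟨g, hgSM, hgb, ?_⟩
  rw [hpull]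
  simp_rw [hkey]
  rw [MeasureTheory.integral_const_mul]
  have href : ∫ σ in Set.Ioc 0 s, auxF ψ N (s - σ) = ∫ t in Set.Ioc 0 s, auxF ψ N t := by
    rw [← intervalIntegral.integral_of_le hs.le, ← intervalIntegral.integral_of_le hs.le,
      intervalIntegral.integral_comp_sub_left (auxF ψ N) s]
    norm_num
  rw [href]
  exact hN

/-- Approximate steering: `T_s x` can be approximately reached by controls of size
`K s * ‖x‖`, thanks to the observability inequality. -/
lemma aux_reach (T : ℝ → X →L[ℝ] X) (B : U →L[ℝ] X)
    (hTcont : ∀ x : X, Continuous fun t => T t x)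
    (hTcontr : ∀ t : ℝ, 0 ≤ t → ‖T t‖ ≤ 1) (K : ℝ → ℝ)
    (hobs : ∀ τ : ℝ, 0 < τ → ∀ η : X,
      ‖(T τ).adjoint η‖ ≤ K τ * ∫ t in Set.Ioc 0 τ, ‖B.adjoint ((T t).adjoint η)‖)
    {s : ℝ} (hs : 0 < s) (hKs : 0 ≤ K s) (x : X) {δ : ℝ} (hδ : 0 < δ) :
    ∃ g : ℝ → U, StronglyMeasurable g ∧ (∀ σ, ‖g σ‖ ≤ K s * ‖x‖) ∧
      ‖(∫ σ in Set.Ioc 0 s, T (s - σ) (B (g σ))) - T s x‖ ≤ δ := by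
  classical
  set c := K s * ‖x‖ with hcdef
  have hc : 0 ≤ c := mul_nonneg hKs (norm_nonneg x)
  set S₀ : Set X := {y | ∃ g : ℝ → U, StronglyMeasurable g ∧ (∀ σ, ‖g σ‖ ≤ c) ∧
      y = ∫ σ in Set.Ioc 0 s, T (s - σ) (B (g σ))} with hS₀
  have hS₀conv : Convex ℝ S₀ := by
    rintro y₁ ⟨g₁, hg₁m, hg₁b, rfl⟩ y₂ ⟨g₂, hg₂m, hg₂b, rfl⟩ a b1 ha hb1 hab
    refine ⟨fun σ => a • g₁ σ + b1 • g₂ σ,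
      (hg₁m.const_smul a).add (hg₂m.const_smul b1), ?_, ?_⟩
    · intro σ
      calc ‖a • g₁ σ + b1 • g₂ σ‖ ≤ ‖a • g₁ σ‖ + ‖b1 • g₂ σ‖ := norm_add_le _ _
        _ = a * ‖g₁ σ‖ + b1 * ‖g₂ σ‖ := by
            rw [norm_smul, norm_smul, Real.norm_eq_abs, Real.norm_eq_abs,
              abs_of_nonneg ha, abs_of_nonneg hb1]
        _ ≤ a * c + b1 * c := add_le_add (mul_le_mul_of_nonneg_left (hg₁b σ) ha)
            (mul_le_mul_of_nonneg_left (hg₂b σ) hb1)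
        _ = c := by rw [← add_mul, hab, one_mul]
    · have h₁ : IntegrableOn (fun σ => T (s - σ) (B (g₁ σ))) (Set.Ioc 0 s) :=
        aux_int T B hTcont hTcontr hg₁m le_rfl (Eventually.of_forall hg₁b)
      have h₂ : IntegrableOn (fun σ => T (s - σ) (B (g₂ σ))) (Set.Ioc 0 s) :=
        aux_int T B hTcont hTcontr hg₂m le_rfl (Eventually.of_forall hg₂b)
      have heq : ∀ σ, T (s - σ) (B (a • g₁ σ + b1 • g₂ σ))
          = a • T (s - σ) (B (g₁ σ)) + b1 • T (s - σ) (B (g₂ σ)) := by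
        intro σ
        simp only [map_add, _root_.map_smul]
      have hs₁ : Integrable (fun σ => a • T (s - σ) (B (g₁ σ)))
          (volume.restrict (Set.Ioc 0 s)) := h₁.smul a
      have hs₂ : Integrable (fun σ => b1 • T (s - σ) (B (g₂ σ)))
          (volume.restrict (Set.Ioc 0 s)) := h₂.smul b1
      simp_rw [heq]
      rw [← integral_smul, ← integral_smul, ← integral_add hs₁ hs₂]
  by_cases hmem : T s x ∈ closure S₀
  · obtain ⟨y, hy, hdist⟩ := Metric.mem_closure_iff.1 hmem δ hδ
    obtain ⟨g, hgm, hgb, rfl⟩ := hy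
    refine ⟨g, hgm, hgb, ?_⟩
    rw [← dist_eq_norm, dist_comm]
    exact hdist.le
  · exfalso
    obtain ⟨F, u, hF1, hF2⟩ := geometric_hahn_banach_closed_point
      hS₀conv.closure isClosed_closure hmem
    set η := (InnerProductSpace.toDual ℝ X).symm F with hη
    have hFη : ∀ z, F z = (inner ℝ η z : ℝ) := fun z =>
      (InnerProductSpace.toDual_symm_apply).symm
    have hchain : u < c * ∫ t in Set.Ioc 0 s, ‖B.adjoint ((T t).adjoint η)‖ := by
      have h1 : u < (inner ℝ η (T s x) : ℝ) := by rw [← hFη]; exact hF2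
      have h2 : (inner ℝ η (T s x) : ℝ) = (inner ℝ ((T s).adjoint η) x : ℝ) :=
        (ContinuousLinearMap.adjoint_inner_left (T s) x η).symm
      have h3 : (inner ℝ ((T s).adjoint η) x : ℝ) ≤ ‖(T s).adjoint η‖ * ‖x‖ :=
        real_inner_le_norm _ _
      have h4 : ‖(T s).adjoint η‖ * ‖x‖
          ≤ (K s * ∫ t in Set.Ioc 0 s, ‖B.adjoint ((T t).adjoint η)‖) * ‖x‖ :=
        mul_le_mul_of_nonneg_right (hobs s hs η) (norm_nonneg x)
      have h5 : (K s * ∫ t in Set.Ioc 0 s, ‖B.adjoint ((T t).adjoint η)‖) * ‖x‖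
          = c * ∫ t in Set.Ioc 0 s, ‖B.adjoint ((T t).adjoint η)‖ := by
        rw [hcdef]; ring
      linarith
    obtain ⟨g, hgm, hgb, hgt⟩ := aux_bang T B hTcont hTcontr hs η hc hchain
    have hmem' : (∫ σ in Set.Ioc 0 s, T (s - σ) (B (g σ))) ∈ S₀ := ⟨g, hgm, hgb, rfl⟩
    have h6 := hF1 _ (subset_closure hmem')
    rw [hFη] at h6
    linarith

end Aux

/-- (Strict monotonicity of the minimal norm function.) Under the `L¹`
observability inequality with `K` continuous and positive, the minimal norm map `τ ↦ N*(τ)`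
is strictly decreasing on `(0, τ̂)`, where `τ̂ = inf {t : ‖T_t ψ‖ ≤ r}`; membership
`τ ∈ (0, τ̂)` is expressed as `0 < τ ∧ ∀ s ∈ (0,τ], r < ‖T_s ψ‖`. -/
theorem stmt13 {X U : Type*} [NormedAddCommGroup X] [InnerProductSpace ℝ X] [CompleteSpace X]
    [NormedAddCommGroup U] [InnerProductSpace ℝ U] [CompleteSpace U]
    (T : ℝ → X →L[ℝ] X) (B : U →L[ℝ] X)
    -- `T` is a `C₀`-semigroup of contractions (generated by `-A`)
    (hT0 : T 0 = 1)
    (hTadd : ∀ s t : ℝ, 0 ≤ s → 0 ≤ t → T (s + t) = (T s).comp (T t))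
    (hTcont : ∀ x : X, Continuous fun t => T t x)
    (hTcontr : ∀ t : ℝ, 0 ≤ t → ‖T t‖ ≤ 1)
    -- the `L¹` observability inequality `K(τ) ∫_0^τ ‖B*T*_t η‖ dt ≥ ‖T*_τ η‖`
    (K : ℝ → ℝ) (hK_pos : ∀ τ : ℝ, 0 < τ → 0 < K τ) (hK_cont : ContinuousOn K (Set.Ioi 0))
    (hobs : ∀ τ : ℝ, 0 < τ → ∀ η : X,
      ‖(T τ).adjoint η‖ ≤ K τ * ∫ t in Set.Ioc 0 τ, ‖B.adjoint ((T t).adjoint η)‖)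
    (r : ℝ) (hr : 0 < r) (ψ : X) (hψ : ψ ∉ Metric.closedBall (0 : X) r)
    -- `N*(τ)` is the minimal `L^∞`-norm of controls steering `ψ` into `B(0,r)` at time `τ`
    (Nstar : ℝ → ℝ)
    (hNstar : ∀ τ : ℝ, 0 < τ → IsLeast {C : ℝ | 0 ≤ C ∧ ∃ f : ℝ → U,
      AEStronglyMeasurable f (volume.restrict (Set.Ioo 0 τ)) ∧
      (∀ᵐ t ∂volume.restrict (Set.Ioo 0 τ), ‖f t‖ ≤ C) ∧
      traj T B ψ f τ ∈ Metric.closedBall (0 : X) r} (Nstar τ))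
    :
    ∀ τ₁ τ₂ : ℝ, 0 < τ₁ → τ₁ < τ₂ → (∀ s ∈ Set.Ioc (0 : ℝ) τ₂, r < ‖T s ψ‖) →
      Nstar τ₂ < Nstar τ₁ := by
  intro τ₁ τ₂ hτ₁ h12 hball
  have hτ₂ : 0 < τ₂ := hτ₁.trans h12
  obtain ⟨⟨hM0, f₀, hf₀m, hf₀b, hf₀traj⟩, hMlb⟩ := hNstar τ₁ hτ₁
  set M := Nstar τ₁ with hMdef
  set f₁ := hf₀m.mk f₀ with hf₁def
  have hf₁SM : StronglyMeasurable f₁ := hf₀m.stronglyMeasurable_mk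
  have hf₁ae : f₀ =ᵐ[volume.restrict (Set.Ioo 0 τ₁)] f₁ := hf₀m.ae_eq_mk
  have hrIoo : volume.restrict (Set.Ioo 0 τ₁) = volume.restrict (Set.Ioc 0 τ₁) :=
    Measure.restrict_congr_set Ioo_ae_eq_Ioc
  have hf₁b : ∀ᵐ σ ∂volume.restrict (Set.Ioc 0 τ₁), ‖f₁ σ‖ ≤ M := by
    rw [← hrIoo]
    filter_upwards [hf₀b, hf₁ae] with σ h1 h2
    rw [← h2]; exact h1
  have hintegrand_ae : (fun σ => T (τ₁ - σ) (B (f₀ σ)))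
      =ᵐ[volume.restrict (Set.Ioc 0 τ₁)] fun σ => T (τ₁ - σ) (B (f₁ σ)) := by
    rw [← hrIoo]
    filter_upwards [hf₁ae] with σ h
    rw [h]
  set w := ∫ σ in Set.Ioc 0 τ₁, T (τ₁ - σ) (B (f₁ σ)) with hwdef
  set z₁ := T τ₁ ψ + w with hz₁def
  have htraj₁ : z₁ ∈ Metric.closedBall (0:X) r := by
    have h : traj T B ψ f₀ τ₁ = z₁ := by
      rw [traj, hz₁def, hwdef]
      congr 1
      exact integral_congr_ae hintegrand_ae
    rw [← h]; exact hf₀traj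
  have hz₁r : ‖z₁‖ ≤ r := by rwa [mem_closedBall_zero_iff] at htraj₁
  have hMpos : 0 < M := by
    rcases lt_or_eq_of_le hM0 with h | h
    · exact h
    · exfalso
      have hf₁0 : (fun σ => T (τ₁ - σ) (B (f₁ σ)))
          =ᵐ[volume.restrict (Set.Ioc 0 τ₁)] 0 := by
        filter_upwards [hf₁b] with σ hσ
        have hz : f₁ σ = 0 := norm_le_zero_iff.1 (by rw [← h] at hσ; exact hσ)
        simp [hz]
      have hw0 : w = 0 := by rw [hwdef]; exact integral_eq_zero_of_ae hf₁0
      have hle : ‖T τ₁ ψ‖ ≤ r := by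
        rw [hz₁def, hw0, add_zero] at hz₁r; exact hz₁r
      exact absurd hle (not_le.2 (hball τ₁ ⟨hτ₁, h12.le⟩))
  set s := τ₂ - τ₁ with hsdef
  have hs : 0 < s := sub_pos.2 h12
  have hKs := hK_pos s hs
  have hden : 0 < 2 * K s * (‖w‖ + r + 1) := by positivity
  set ε := min (1/2) (M / (2 * K s * (‖w‖ + r + 1))) with hεdef
  have hε0 : 0 < ε := lt_min (by norm_num) (div_pos hMpos hden)
  have hehalf : ε ≤ 1/2 := min_le_left _ _
  set x := ε • (w - z₁) with hxdef
  have hxb : ‖x‖ ≤ ε * (‖w‖ + r) := by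
    rw [hxdef, norm_smul, Real.norm_eq_abs, abs_of_nonneg hε0.le]
    refine mul_le_mul_of_nonneg_left ?_ hε0.le
    calc ‖w - z₁‖ ≤ ‖w‖ + ‖z₁‖ := norm_sub_le _ _
      _ ≤ ‖w‖ + r := by linarith
  obtain ⟨g, hgSM, hgb, hgclose⟩ :=
    aux_reach T B hTcont hTcontr K hobs hs hKs.le x (mul_pos hε0 hr)
  set Wg := ∫ σ in Set.Ioc 0 s, T (s - σ) (B (g σ)) with hWgdef
  set C := max ((1 - ε) * M) (K s * ‖x‖) with hCdef
  have hCM : C < M := by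
    apply max_lt
    · nlinarith
    · have h1 : K s * ‖x‖ ≤ K s * (ε * (‖w‖ + r)) := mul_le_mul_of_nonneg_left hxb hKs.le
      have h2 : ε ≤ M / (2 * K s * (‖w‖ + r + 1)) := min_le_right _ _
      have h4 : ε * (2 * K s * (‖w‖ + r + 1)) ≤ M := by
        rw [← le_div_iff₀ hden]; exact h2
      nlinarith [norm_nonneg w, hε0, hKs]
  have hC0 : 0 ≤ C := le_max_of_le_left (by nlinarith)
  set f : ℝ → U :=
    (Set.Iic τ₁).piecewise (fun σ => (1 - ε) • f₁ σ) (fun σ => g (σ - τ₁)) with hfdef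
  have hfSM : StronglyMeasurable f := by
    rw [hfdef]
    exact StronglyMeasurable.piecewise measurableSet_Iic (hf₁SM.const_smul _)
      (hgSM.comp_measurable (measurable_id.sub measurable_const))
  have hfb : ∀ᵐ σ ∂volume.restrict (Set.Ioo 0 τ₂), ‖f σ‖ ≤ C := by
    rw [ae_restrict_iff' measurableSet_Ioo]
    have h1 : ∀ᵐ σ ∂volume, σ ∈ Set.Ioo 0 τ₁ → ‖f₁ σ‖ ≤ M := by
      rw [← ae_restrict_iff' measurableSet_Ioo, hrIoo]
      exact hf₁b
    have h2 : ∀ᵐ σ : ℝ ∂volume, σ ≠ τ₁ := by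
      rw [ae_iff]
      have hset : {a : ℝ | ¬ a ≠ τ₁} = {τ₁} := by ext a; simp
      rw [hset]
      exact Real.volume_singleton
    filter_upwards [h1, h2] with σ hσ1 hσ2 hσmem
    by_cases hle : σ ≤ τ₁
    · have hlt : σ < τ₁ := lt_of_le_of_ne hle hσ2
      have hval : f σ = (1 - ε) • f₁ σ :=
        Set.piecewise_eq_of_mem _ _ _ (Set.mem_Iic.2 hle)
      rw [hval, norm_smul, Real.norm_eq_abs, abs_of_nonneg (by linarith : (0:ℝ) ≤ 1 - ε)]
      calc (1-ε) * ‖f₁ σ‖ ≤ (1-ε) * M :=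
            mul_le_mul_of_nonneg_left (hσ1 ⟨hσmem.1, hlt⟩) (by linarith)
        _ ≤ C := le_max_left _ _
    · have hval : f σ = g (σ - τ₁) :=
        Set.piecewise_eq_of_notMem _ _ _ (by simpa using hle)
      rw [hval]
      exact (hgb _).trans (le_max_right _ _)
  -- trajectory computation
  have hf₁εb : ∀ᵐ σ ∂volume.restrict (Set.Ioc 0 τ₁), ‖(1 - ε) • f₁ σ‖ ≤ (1-ε) * M := by
    filter_upwards [hf₁b] with σ hσ
    rw [norm_smul, Real.norm_eq_abs, abs_of_nonneg (by linarith : (0:ℝ) ≤ 1 - ε)]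
    exact mul_le_mul_of_nonneg_left hσ (by linarith)
  have hIntOn1 : IntegrableOn (fun σ => T (τ₂ - σ) (B ((1 - ε) • f₁ σ))) (Set.Ioc 0 τ₁) :=
    aux_int T B hTcont hTcontr (hf₁SM.const_smul _) h12.le hf₁εb
  have hIntOn2 : IntegrableOn (fun σ => T (τ₂ - σ) (B (g (σ - τ₁)))) (Set.Ioc τ₁ τ₂) :=
    aux_int T B hTcont hTcontr (hgSM.comp_measurable (measurable_id.sub measurable_const))
      le_rfl (Eventually.of_forall fun σ => hgb _)
  have hf_on1 : Set.EqOn (fun σ => T (τ₂ - σ) (B (f σ)))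
      (fun σ => T (τ₂ - σ) (B ((1 - ε) • f₁ σ))) (Set.Ioc 0 τ₁) := by
    intro σ hσ
    simp only
    rw [hfdef, Set.piecewise_eq_of_mem _ _ _ (Set.mem_Iic.2 hσ.2)]
  have hf_on2 : Set.EqOn (fun σ => T (τ₂ - σ) (B (f σ)))
      (fun σ => T (τ₂ - σ) (B (g (σ - τ₁)))) (Set.Ioc τ₁ τ₂) := by
    intro σ hσ
    simp only
    rw [hfdef, Set.piecewise_eq_of_notMem _ _ _ (by simpa using not_le.2 hσ.1)]
  have hint1 : IntegrableOn (fun σ => T (τ₂ - σ) (B (f σ))) (Set.Ioc 0 τ₁) :=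
    hIntOn1.congr_fun hf_on1.symm measurableSet_Ioc
  have hint2 : IntegrableOn (fun σ => T (τ₂ - σ) (B (f σ))) (Set.Ioc τ₁ τ₂) :=
    hIntOn2.congr_fun hf_on2.symm measurableSet_Ioc
  have hI : (∫ σ in Set.Ioc 0 τ₂, T (τ₂ - σ) (B (f σ)))
      = (∫ σ in Set.Ioc 0 τ₁, T (τ₂ - σ) (B (f σ)))
        + ∫ σ in Set.Ioc τ₁ τ₂, T (τ₂ - σ) (B (f σ)) := by
    rw [← Set.Ioc_union_Ioc_eq_Ioc hτ₁.le h12.le]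
    exact setIntegral_union (Set.Ioc_disjoint_Ioc_of_le le_rfl) measurableSet_Ioc hint1 hint2
  have hwint : IntegrableOn (fun σ => T (τ₁ - σ) (B (f₁ σ))) (Set.Ioc 0 τ₁) :=
    aux_int T B hTcont hTcontr hf₁SM le_rfl hf₁b
  have hpiece1 : (∫ σ in Set.Ioc 0 τ₁, T (τ₂ - σ) (B (f σ))) = (1 - ε) • T s w := by
    rw [setIntegral_congr_fun measurableSet_Ioc hf_on1]
    have he : Set.EqOn (fun σ => T (τ₂ - σ) (B ((1 - ε) • f₁ σ)))
        (fun σ => (1 - ε) • T s (T (τ₁ - σ) (B (f₁ σ)))) (Set.Ioc 0 τ₁) := by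
      intro σ hσ
      simp only
      rw [_root_.map_smul, _root_.map_smul]
      congr 1
      have harg : τ₂ - σ = s + (τ₁ - σ) := by rw [hsdef]; ring
      rw [harg, hTadd s (τ₁ - σ) hs.le (by linarith [hσ.2])]
      rfl
    rw [setIntegral_congr_fun measurableSet_Ioc he, integral_smul]
    congr 1
    rw [← ContinuousLinearMap.integral_comp_comm (T s) hwint]
  have hpiece2 : (∫ σ in Set.Ioc τ₁ τ₂, T (τ₂ - σ) (B (f σ))) = Wg := by
    rw [setIntegral_congr_fun measurableSet_Ioc hf_on2]
    have himg : (fun σ : ℝ => σ + τ₁) '' Set.Ioc 0 s = Set.Ioc τ₁ τ₂ := by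
      rw [Set.image_add_const_Ioc]
      rw [hsdef]
      norm_num
    have hmp : MeasurePreserving (fun σ : ℝ => σ + τ₁) volume volume :=
      measurePreserving_add_right volume τ₁
    have hemb : MeasurableEmbedding (fun σ : ℝ => σ + τ₁) :=
      (MeasurableEquiv.addRight τ₁).measurableEmbedding
    rw [← himg, hmp.setIntegral_image_emb hemb, hWgdef]
    refine setIntegral_congr_fun measurableSet_Ioc fun σ hσ => ?_
    show T (τ₂ - (σ + τ₁)) (B (g (σ + τ₁ - τ₁))) = T (s - σ) (B (g σ))
    have h1 : τ₂ - (σ + τ₁) = s - σ := by rw [hsdef]; ring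
    have h2 : σ + τ₁ - τ₁ = σ := by ring
    rw [h1, h2]
  have htraj₂ : traj T B ψ f τ₂ = (1 - ε) • T s z₁ + (Wg - T s x) := by
    rw [traj, hI, hpiece1, hpiece2]
    have hTψ : T τ₂ ψ = T s (T τ₁ ψ) := by
      have h : τ₂ = s + τ₁ := by rw [hsdef]; ring
      rw [h, hTadd s τ₁ hs.le hτ₁.le]
      rfl
    have hTx : T s x = ε • T s w - ε • T s z₁ := by
      rw [hxdef, _root_.map_smul, map_sub, smul_sub]
    have hTz : T s z₁ = T s (T τ₁ ψ) + T s w := by rw [hz₁def, map_add]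
    rw [hTψ, hTx]
    rw [hTz]
    module
  have hfinal : traj T B ψ f τ₂ ∈ Metric.closedBall (0:X) r := by
    rw [mem_closedBall_zero_iff, htraj₂]
    calc ‖(1-ε) • T s z₁ + (Wg - T s x)‖
        ≤ ‖(1-ε) • T s z₁‖ + ‖Wg - T s x‖ := norm_add_le _ _
      _ ≤ (1-ε) * r + ε * r := by
          refine add_le_add ?_ hgclose
          rw [norm_smul, Real.norm_eq_abs, abs_of_nonneg (by linarith : (0:ℝ) ≤ 1 - ε)]
          refine mul_le_mul_of_nonneg_left ?_ (by linarith)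
          calc ‖T s z₁‖ ≤ ‖T s‖ * ‖z₁‖ := (T s).le_opNorm _
            _ ≤ 1 * r := mul_le_mul (hTcontr s hs.le) hz₁r (norm_nonneg _) zero_le_one
            _ = r := one_mul r
      _ = r := by ring
  have hCmem : C ∈ {C : ℝ | 0 ≤ C ∧ ∃ f : ℝ → U,
      AEStronglyMeasurable f (volume.restrict (Set.Ioo 0 τ₂)) ∧
      (∀ᵐ t ∂volume.restrict (Set.Ioo 0 τ₂), ‖f t‖ ≤ C) ∧
      traj T B ψ f τ₂ ∈ Metric.closedBall (0 : X) r} :=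
    ⟨hC0, f, hfSM.aestronglyMeasurable, hfb, hfinal⟩
  have hle := (hNstar τ₂ hτ₂).2 hCmem
  calc Nstar τ₂ ≤ C := hle
    _ < M := hCM
end

section
/- Under the same assumptions, τ ↦ N*(τ) is continuous on (0, τ̂). -/
open MeasureTheory Filter

set_option linter.unusedSectionVars false
set_option linter.unusedVariables false
set_option maxHeartbeats 1000000

section Aux

variable {X U : Type*} [NormedAddCommGroup X] [InnerProductSpace ℝ X] [CompleteSpace X]
    [NormedAddCommGroup U] [InnerProductSpace ℝ U] [CompleteSpace U]
    (T : ℝ → X →L[ℝ] X) (B : U →L[ℝ] X)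

lemma normT_le (hTcontr : ∀ t : ℝ, 0 ≤ t → ‖T t‖ ≤ 1) {t : ℝ} (ht : 0 ≤ t) (x : X) :
    ‖T t x‖ ≤ ‖x‖ := by
  calc ‖T t x‖ ≤ ‖T t‖ * ‖x‖ := (T t).le_opNorm x
  _ ≤ 1 * ‖x‖ := mul_le_mul_of_nonneg_right (hTcontr t ht) (norm_nonneg x)
  _ = ‖x‖ := one_mul _

lemma jointCont (hTcont : ∀ x : X, Continuous fun t => T t x)
    (hTcontr : ∀ t : ℝ, 0 ≤ t → ‖T t‖ ≤ 1) :
    Continuous fun p : ℝ × X => T (max p.1 0) p.2 := by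
  rw [continuous_iff_continuousAt]
  rintro ⟨t₀, x₀⟩
  have h1 : ContinuousAt (fun p : ℝ × X => T (max p.1 0) x₀) (t₀, x₀) :=
    (((hTcont x₀).comp (continuous_id.max continuous_const)).comp continuous_fst).continuousAt
  have h2 : Tendsto (fun p : ℝ × X => T (max p.1 0) (p.2 - x₀)) (nhds (t₀, x₀)) (nhds 0) := by
    apply squeeze_zero_norm (a := fun p : ℝ × X => ‖p.2 - x₀‖)
    · intro p
      exact normT_le T hTcontr (le_max_right _ _) _
    · have : Tendsto (fun p : ℝ × X => p.2 - x₀) (nhds (t₀, x₀)) (nhds (x₀ - x₀)) :=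
        (continuous_snd.sub continuous_const).continuousAt
      rw [sub_self] at this
      simpa using this.norm
  have hsum : Tendsto (fun p : ℝ × X => T (max p.1 0) x₀ + T (max p.1 0) (p.2 - x₀))
      (nhds (t₀, x₀)) (nhds (T (max t₀ 0) x₀ + 0)) := Tendsto.add h1 h2
  rw [add_zero] at hsum
  unfold ContinuousAt
  have he : ∀ p : ℝ × X, T (max p.1 0) p.2 = T (max p.1 0) x₀ + T (max p.1 0) (p.2 - x₀) :=
    fun p => by rw [← map_add]; congr 1; abel
  simp only [he]
  simpa using hsum

/-- integrability of the kernel against a bounded a.e.-strongly-measurable control -/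
lemma integrable_kernel (hTcont : ∀ x : X, Continuous fun t => T t x)
    (hTcontr : ∀ t : ℝ, 0 ≤ t → ‖T t‖ ≤ 1)
    {f : ℝ → U} {a b t C : ℝ} (hbt : b ≤ t)
    (hf : AEStronglyMeasurable f (volume.restrict (Set.Ioc a b)))
    (hbd : ∀ᵐ σ ∂volume.restrict (Set.Ioc a b), ‖f σ‖ ≤ C) :
    IntegrableOn (fun σ => T (t - σ) (B (f σ))) (Set.Ioc a b) volume := by
  have hG : AEStronglyMeasurable (fun σ => T (max (t - σ) 0) (B (f σ)))
      (volume.restrict (Set.Ioc a b)) := by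
    have hpair : AEStronglyMeasurable (fun σ => ((t - σ, B (f σ)) : ℝ × X))
        (volume.restrict (Set.Ioc a b)) :=
      ((continuous_const.sub continuous_id).aestronglyMeasurable).prodMk
        (B.continuous.comp_aestronglyMeasurable hf)
    exact (jointCont T hTcont hTcontr).comp_aestronglyMeasurable hpair
  have hmeas : AEStronglyMeasurable (fun σ => T (t - σ) (B (f σ)))
      (volume.restrict (Set.Ioc a b)) := by
    apply hG.congr
    filter_upwards [ae_restrict_mem measurableSet_Ioc] with σ hσ
    have : max (t - σ) 0 = t - σ := max_eq_left (by linarith [hσ.2])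
    rw [this]
  apply Integrable.mono' (g := fun _ => ‖B‖ * C)
  · exact integrableOn_const (by simp [Real.volume_Ioc])
  · exact hmeas
  · filter_upwards [hbd, ae_restrict_mem measurableSet_Ioc] with σ hσ hmem
    calc ‖T (t - σ) (B (f σ))‖ ≤ ‖B (f σ)‖ := normT_le T hTcontr (by linarith [hmem.2]) _
    _ ≤ ‖B‖ * ‖f σ‖ := B.le_opNorm _
    _ ≤ ‖B‖ * C := mul_le_mul_of_nonneg_left hσ (norm_nonneg _)


lemma norm_adjointT_le (hTcontr : ∀ t : ℝ, 0 ≤ t → ‖T t‖ ≤ 1) {s : ℝ} (hs : 0 ≤ s) (η : X) :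
    ‖(T s).adjoint η‖ ≤ ‖η‖ := by
  calc ‖(T s).adjoint η‖ ≤ ‖(T s).adjoint‖ * ‖η‖ := ContinuousLinearMap.le_opNorm _ _
    _ ≤ 1 * ‖η‖ := by
        apply mul_le_mul_of_nonneg_right _ (norm_nonneg _)
        calc ‖(T s).adjoint‖ = ‖T s‖ := LinearIsometryEquiv.norm_map _ _
          _ ≤ 1 := hTcontr s hs
    _ = ‖η‖ := one_mul _

/-- master estimate for adjoint continuity -/
lemma adjoint_est (hT0 : T 0 = 1)
    (hTadd : ∀ s t : ℝ, 0 ≤ s → 0 ≤ t → T (s + t) = (T s).comp (T t))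
    (hTcontr : ∀ t : ℝ, 0 ≤ t → ‖T t‖ ≤ 1) (η : X) {s t : ℝ} (hs : 0 ≤ s) (hst : s ≤ t) :
    ‖(T t).adjoint η - (T s).adjoint η‖ ^ 2
      ≤ 2 * ‖η‖ ^ 2 - 2 * (inner ℝ η (T (t - s) η) : ℝ) := by
  have hts : 0 ≤ t - s := by linarith
  have hcomp : T t = (T (t - s)).comp (T s) := by
    have := hTadd (t - s) s hts hs
    rwa [sub_add_cancel] at this
  have hkey : (T t).adjoint η - (T s).adjoint η
      = (T s).adjoint ((T (t - s)).adjoint η - η) := by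
    rw [map_sub, hcomp, ContinuousLinearMap.adjoint_comp]
    rfl
  have h1 : ‖(T t).adjoint η - (T s).adjoint η‖ ≤ ‖(T (t - s)).adjoint η - η‖ := by
    rw [hkey]
    exact norm_adjointT_le T hTcontr hs _
  have h2 : ‖(T (t - s)).adjoint η - η‖ ^ 2 ≤ 2 * ‖η‖ ^ 2 - 2 * (inner ℝ η (T (t - s) η) : ℝ) := by
    rw [norm_sub_sq_real]
    have hadj : (inner ℝ ((T (t - s)).adjoint η) η : ℝ) = inner ℝ η (T (t - s) η) :=
      ContinuousLinearMap.adjoint_inner_left _ _ _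
    have hnorm : ‖(T (t - s)).adjoint η‖ ≤ ‖η‖ := norm_adjointT_le T hTcontr hts η
    nlinarith [norm_nonneg ((T (t - s)).adjoint η), norm_nonneg η]
  calc ‖(T t).adjoint η - (T s).adjoint η‖ ^ 2 ≤ ‖(T (t - s)).adjoint η - η‖ ^ 2 := by
        apply pow_le_pow_left₀ (norm_nonneg _) h1
    _ ≤ _ := h2

lemma adjoint_contOn (hT0 : T 0 = 1)
    (hTadd : ∀ s t : ℝ, 0 ≤ s → 0 ≤ t → T (s + t) = (T s).comp (T t))
    (hTcont : ∀ x : X, Continuous fun t => T t x)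
    (hTcontr : ∀ t : ℝ, 0 ≤ t → ‖T t‖ ≤ 1) (η : X) :
    ContinuousOn (fun t => (T t).adjoint η) (Set.Ici 0) := by
  intro t₀ ht₀
  have hφ : Continuous fun δ : ℝ => 2 * ‖η‖ ^ 2 - 2 * (inner ℝ η (T δ η) : ℝ) := by
    have : Continuous fun δ : ℝ => (inner ℝ η (T δ η) : ℝ) :=
      continuous_const.inner (hTcont η)
    fun_prop
  have hφ0 : (2 * ‖η‖ ^ 2 - 2 * (inner ℝ η (T 0 η) : ℝ)) = 0 := by
    rw [hT0]
    simp [real_inner_self_eq_norm_sq]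
  rw [Metric.continuousWithinAt_iff]
  intro ε hε
  -- choose δ so that |t - t₀| < δ → φ |t - t₀| < ε^2
  have htends : Tendsto (fun t : ℝ => 2 * ‖η‖ ^ 2 - 2 * (inner ℝ η (T (|t - t₀|) η) : ℝ))
      (nhds t₀) (nhds 0) := by
    have h1 : Tendsto (fun t : ℝ => |t - t₀|) (nhds t₀) (nhds 0) := by
      simpa using ((continuous_id.sub (continuous_const (y := t₀))).abs.tendsto t₀)
    rw [← hφ0]
    exact (hφ.tendsto 0).comp h1
  have hev := htends (Metric.ball_mem_nhds 0 (by positivity : (0:ℝ) < ε ^ 2))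
  rw [mem_map] at hev
  rcases Metric.mem_nhds_iff.1 hev with ⟨δ, hδ, hball⟩
  refine ⟨δ, hδ, ?_⟩
  intro t ht hdist
  have hmem : t ∈ Metric.ball t₀ δ := by rwa [Metric.mem_ball] at *
  have hφlt : 2 * ‖η‖ ^ 2 - 2 * (inner ℝ η (T (|t - t₀|) η) : ℝ) < ε ^ 2 := by
    have := hball hmem
    simp only [Set.mem_preimage, Metric.mem_ball, Real.dist_eq, sub_zero] at this
    calc _ ≤ |2 * ‖η‖ ^ 2 - 2 * (inner ℝ η (T (|t - t₀|) η) : ℝ)| := le_abs_self _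
    _ < ε ^ 2 := this
  have hsq : ‖(T t).adjoint η - (T t₀).adjoint η‖ ^ 2
      ≤ 2 * ‖η‖ ^ 2 - 2 * (inner ℝ η (T (|t - t₀|) η) : ℝ) := by
    rcases le_total t₀ t with h | h
    · have h' := adjoint_est T hT0 hTadd hTcontr η ht₀ h
      have habs : |t - t₀| = t - t₀ := abs_of_nonneg (by linarith)
      rw [habs]
      exact h'
    · have h' := adjoint_est T hT0 hTadd hTcontr η ht h
      rw [norm_sub_rev] at h'
      have habs : |t - t₀| = t₀ - t := by
        rw [abs_sub_comm]; exact abs_of_nonneg (by linarith)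
      rw [habs]
      exact h'
  rw [dist_eq_norm]
  nlinarith [norm_nonneg ((T t).adjoint η - (T t₀).adjoint η)]

end Aux

section AuxB

variable {X U : Type*} [NormedAddCommGroup X] [InnerProductSpace ℝ X] [CompleteSpace X]
    [NormedAddCommGroup U] [InnerProductSpace ℝ U] [CompleteSpace U]
    (T : ℝ → X →L[ℝ] X) (B : U →L[ℝ] X)

lemma restrict_Ioo_eq_Ioc (a b : ℝ) :
    (volume : Measure ℝ).restrict (Set.Ioo a b) = volume.restrict (Set.Ioc a b) :=
  Measure.restrict_congr_set Ioo_ae_eq_Ioc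

lemma aesm_sub {V : Type*} [NormedAddCommGroup V] {f : ℝ → V} {s t : Set ℝ} (hst : s ⊆ t)
    (h : AEStronglyMeasurable f ((volume : Measure ℝ).restrict t)) :
    AEStronglyMeasurable f (volume.restrict s) := by
  have he : (volume : Measure ℝ).restrict s = ((volume : Measure ℝ).restrict t).restrict s := by
    rw [Measure.restrict_restrict_of_subset hst]
  rw [he]
  exact h.restrict

lemma ae_sub {p : ℝ → Prop} {s t : Set ℝ} (hst : s ⊆ t)
    (h : ∀ᵐ σ ∂(volume : Measure ℝ).restrict t, p σ) :
    ∀ᵐ σ ∂(volume : Measure ℝ).restrict s, p σ :=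
  ae_restrict_of_ae_restrict_of_subset hst h

lemma integral_Ioc_shift {V : Type*} [NormedAddCommGroup V] [NormedSpace ℝ V]
    {g : ℝ → V} (a b c : ℝ) :
    ∫ σ in Set.Ioc a b, g (σ + c) = ∫ σ in Set.Ioc (a + c) (b + c), g σ := by
  rcases le_or_gt a b with h | h
  · rw [← intervalIntegral.integral_of_le h, ← intervalIntegral.integral_of_le (by linarith)]
    exact intervalIntegral.integral_comp_add_right g c
  · rw [Set.Ioc_eq_empty (by exact fun hc => absurd hc (not_lt.2 h.le)),
      Set.Ioc_eq_empty (by intro hc; linarith)]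
    simp

lemma norm_setIntegral_Ioc_le {V : Type*} [NormedAddCommGroup V] [NormedSpace ℝ V]
    {g : ℝ → V} {a b C : ℝ} (hab : a ≤ b) (hC : 0 ≤ C)
    (hbd : ∀ᵐ σ ∂(volume : Measure ℝ).restrict (Set.Ioc a b), ‖g σ‖ ≤ C) :
    ‖∫ σ in Set.Ioc a b, g σ‖ ≤ C * (b - a) := by
  have h1 : ‖∫ σ in Set.Ioc a b, g σ‖ ≤ ∫ σ in Set.Ioc a b, C := by
    apply norm_integral_le_of_norm_le _ hbd
    exact integrableOn_const (by simp [Real.volume_Ioc])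
  have h2 : ∫ (_ : ℝ) in Set.Ioc a b, C = C * (b - a) := by
    rw [setIntegral_const, Real.volume_real_Ioc_of_le hab, smul_eq_mul]
    ring
  linarith [h1, h2 ▸ h1]

/-- splitting the trajectory at an intermediate time -/
lemma traj_split
    (hTadd : ∀ s t : ℝ, 0 ≤ s → 0 ≤ t → T (s + t) = (T s).comp (T t))
    (hTcont : ∀ x : X, Continuous fun t => T t x)
    (hTcontr : ∀ t : ℝ, 0 ≤ t → ‖T t‖ ≤ 1)
    {a b : ℝ} (h0a : 0 ≤ a) (hab : a ≤ b) (ψ' : X)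
    {f : ℝ → U} {C : ℝ}
    (hf : AEStronglyMeasurable f (volume.restrict (Set.Ioc 0 b)))
    (hbd : ∀ᵐ σ ∂volume.restrict (Set.Ioc 0 b), ‖f σ‖ ≤ C) :
    traj T B ψ' f b
      = T (b - a) (traj T B ψ' f a) + ∫ σ in Set.Ioc a b, T (b - σ) (B (f σ)) := by
  have hsub1 : Set.Ioc 0 a ⊆ Set.Ioc 0 b := Set.Ioc_subset_Ioc_right hab
  have hsub2 : Set.Ioc a b ⊆ Set.Ioc 0 b := Set.Ioc_subset_Ioc_left h0a
  have hint1 : IntegrableOn (fun σ => T (b - σ) (B (f σ))) (Set.Ioc 0 a) volume :=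
    integrable_kernel T B hTcont hTcontr hab (aesm_sub hsub1 hf) (ae_sub hsub1 hbd)
  have hint2 : IntegrableOn (fun σ => T (b - σ) (B (f σ))) (Set.Ioc a b) volume :=
    integrable_kernel T B hTcont hTcontr le_rfl (aesm_sub hsub2 hf) (ae_sub hsub2 hbd)
  have hint3 : IntegrableOn (fun σ => T (a - σ) (B (f σ))) (Set.Ioc 0 a) volume :=
    integrable_kernel T B hTcont hTcontr le_rfl (aesm_sub hsub1 hf) (ae_sub hsub1 hbd)
  have hsplit : ∫ σ in Set.Ioc 0 b, T (b - σ) (B (f σ))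
      = (∫ σ in Set.Ioc 0 a, T (b - σ) (B (f σ)))
        + ∫ σ in Set.Ioc a b, T (b - σ) (B (f σ)) := by
    rw [← Set.Ioc_union_Ioc_eq_Ioc h0a hab]
    exact setIntegral_union (Set.Ioc_disjoint_Ioc_of_le le_rfl) measurableSet_Ioc hint1 hint2
  have hfac : ∫ σ in Set.Ioc 0 a, T (b - σ) (B (f σ))
      = T (b - a) (∫ σ in Set.Ioc 0 a, T (a - σ) (B (f σ))) := by
    have he : ∀ σ ∈ Set.Ioc 0 a, T (b - σ) (B (f σ)) = T (b - a) (T (a - σ) (B (f σ))) := by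
      intro σ hσ
      have h1 : b - σ = (b - a) + (a - σ) := by ring
      rw [h1, hTadd (b - a) (a - σ) (by linarith) (by linarith [hσ.2])]
      rfl
    rw [setIntegral_congr_fun measurableSet_Ioc he]
    exact ((T (b - a)).integral_comp_comm hint3)
  have hTb : T b ψ' = T (b - a) (T a ψ') := by
    have h2 : T b = (T (b - a)).comp (T a) := by
      rw [← hTadd (b - a) a (by linarith) h0a, sub_add_cancel]
    rw [h2]; rfl
  simp only [traj]
  rw [hsplit, hfac, hTb, map_add]
  abel

end AuxB

section AuxC

variable {X U : Type*} [NormedAddCommGroup X] [InnerProductSpace ℝ X] [CompleteSpace X]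
    [NormedAddCommGroup U] [InnerProductSpace ℝ U] [CompleteSpace U]
    (T : ℝ → X →L[ℝ] X) (B : U →L[ℝ] X)

/-- approximate null-steering with cost `K τ * ‖y‖`, by continuous controls -/
lemma approx_steer (hT0 : T 0 = 1)
    (hTadd : ∀ s t : ℝ, 0 ≤ s → 0 ≤ t → T (s + t) = (T s).comp (T t))
    (hTcont : ∀ x : X, Continuous fun t => T t x)
    (hTcontr : ∀ t : ℝ, 0 ≤ t → ‖T t‖ ≤ 1)
    (K : ℝ → ℝ) (hK_pos : ∀ τ : ℝ, 0 < τ → 0 < K τ)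
    (hobs : ∀ τ : ℝ, 0 < τ → ∀ η : X,
      ‖(T τ).adjoint η‖ ≤ K τ * ∫ t in Set.Ioc 0 τ, ‖B.adjoint ((T t).adjoint η)‖)
    (τ : ℝ) (hτ : 0 < τ) (y : X) (ε : ℝ) (hε : 0 < ε) :
    ∃ f : ℝ → U, Continuous f ∧ (∀ σ, ‖f σ‖ ≤ K τ * ‖y‖) ∧
      ‖T τ y + ∫ σ in Set.Ioc 0 τ, T (τ - σ) (B (f σ))‖ ≤ ε := by
  by_cases hy : y = 0
  · refine ⟨0, continuous_const, fun σ => by simp [mul_nonneg (hK_pos τ hτ).le (norm_nonneg y)], ?_⟩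
    subst hy
    simp [hε.le]
  by_contra hcon
  push_neg at hcon
  set M : ℝ := K τ * ‖y‖ with hM
  have hM0 : 0 < M := mul_pos (hK_pos τ hτ) (norm_pos_iff.2 hy)
  set Rs : Set X := {x | ∃ f : ℝ → U, Continuous f ∧ (∀ σ, ‖f σ‖ ≤ M) ∧
    x = ∫ σ in Set.Ioc 0 τ, T (τ - σ) (B (f σ))} with hRs
  have hint : ∀ (f : ℝ → U), Continuous f → (∀ σ, ‖f σ‖ ≤ M) →
      IntegrableOn (fun σ => T (τ - σ) (B (f σ))) (Set.Ioc 0 τ) volume := by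
    intro f hfc hfb
    exact integrable_kernel T B hTcont hTcontr le_rfl
      hfc.aestronglyMeasurable (ae_of_all _ hfb)
  have hconv : Convex ℝ Rs := by
    rintro x ⟨f, hfc, hfb, rfl⟩ x' ⟨g, hgc, hgb, rfl⟩ a b ha hb hab
    refine ⟨fun σ => a • f σ + b • g σ, by fun_prop, ?_, ?_⟩
    · intro σ
      calc ‖a • f σ + b • g σ‖ ≤ ‖a • f σ‖ + ‖b • g σ‖ := norm_add_le _ _
        _ = a * ‖f σ‖ + b * ‖g σ‖ := by
            rw [norm_smul, norm_smul, Real.norm_eq_abs, Real.norm_eq_abs,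
              abs_of_nonneg ha, abs_of_nonneg hb]
        _ ≤ a * M + b * M := by
            gcongr
            exact hfb σ
            exact hgb σ
        _ = M := by rw [← add_mul, hab, one_mul]
    · have hIf' : IntegrableOn (fun σ => a • T (τ - σ) (B (f σ))) (Set.Ioc 0 τ) volume :=
        (hint f hfc hfb).smul a
      have hIg' : IntegrableOn (fun σ => b • T (τ - σ) (B (g σ))) (Set.Ioc 0 τ) volume :=
        (hint g hgc hgb).smul b
      rw [← integral_smul, ← integral_smul, ← integral_add hIf' hIg']
      apply setIntegral_congr_fun measurableSet_Ioc
      intro σ _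
      show a • T (τ - σ) (B (f σ)) + b • T (τ - σ) (B (g σ))
          = T (τ - σ) (B (a • f σ + b • g σ))
      rw [map_add B, _root_.map_smul B, _root_.map_smul B, map_add (T (τ - σ)),
        _root_.map_smul (T (τ - σ)), _root_.map_smul (T (τ - σ))]
  have hx : -(T τ y) ∉ closure Rs := by
    intro hmem
    rw [Metric.mem_closure_iff] at hmem
    obtain ⟨z, hz, hdist⟩ := hmem ε hε
    obtain ⟨f, hfc, hfb, rfl⟩ := hz
    have hgt := hcon f hfc hfb
    rw [dist_eq_norm] at hdist
    have : ‖-(T τ y) - ∫ σ in Set.Ioc 0 τ, T (τ - σ) (B (f σ))‖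
        = ‖T τ y + ∫ σ in Set.Ioc 0 τ, T (τ - σ) (B (f σ))‖ := by
      rw [← norm_neg]; congr 1; abel
    rw [this] at hdist
    linarith
  obtain ⟨φ, u₀, hsep, hu₀⟩ :=
    geometric_hahn_banach_closed_point hconv.closure isClosed_closure hx
  set η : X := (InnerProductSpace.toDual ℝ X).symm φ with hηdef
  have hη : ∀ x : X, (inner ℝ η x : ℝ) = φ x := fun x => InnerProductSpace.toDual_symm_apply
  -- the dual observation function
  set F : ℝ → U := fun t => B.adjoint ((T (max t 0)).adjoint η) with hFdef
  have hFcont : Continuous F := by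
    apply B.adjoint.continuous.comp
    exact (adjoint_contOn T hT0 hTadd hTcont hTcontr η).comp_continuous
      (continuous_id.max continuous_const) (fun t => Set.mem_Ici.2 (le_max_right _ _))
  -- the approximating maximizing controls
  set q : ℕ → ℝ → U := fun n σ => (M * (‖F (τ - σ)‖ + 1 / (n + 1))⁻¹) • F (τ - σ) with hqdef
  have hden : ∀ n : ℕ, ∀ σ : ℝ, (0:ℝ) < ‖F (τ - σ)‖ + 1 / (n + 1) := by
    intro n σ
    have : (0:ℝ) < 1 / (n + 1) := by positivity
    linarith [norm_nonneg (F (τ - σ))]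
  have hqcont : ∀ n, Continuous (q n) := by
    intro n
    apply Continuous.smul
    · exact continuous_const.mul
        (((hFcont.comp (continuous_const.sub continuous_id)).norm.add
          continuous_const).inv₀ (fun σ => (hden n σ).ne'))
    · exact hFcont.comp (continuous_const.sub continuous_id)
  have hqb : ∀ n σ, ‖q n σ‖ ≤ M := by
    intro n σ
    rw [hqdef]
    simp only [norm_smul, Real.norm_eq_abs]
    rw [abs_of_nonneg (by positivity : (0:ℝ) ≤ M * (‖F (τ - σ)‖ + 1 / (n + 1))⁻¹)]
    rw [mul_assoc]
    apply mul_le_of_le_one_right hM0.le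
    have hd := hden n σ
    have h3 : ‖F (τ - σ)‖ ≤ ‖F (τ - σ)‖ + 1 / (n + 1) := by
      have : (0:ℝ) ≤ 1 / ((n:ℝ) + 1) := by positivity
      linarith
    calc (‖F (τ - σ)‖ + 1 / (n + 1))⁻¹ * ‖F (τ - σ)‖
        ≤ (‖F (τ - σ)‖ + 1 / (n + 1))⁻¹ * (‖F (τ - σ)‖ + 1 / (n + 1)) :=
          mul_le_mul_of_nonneg_left h3 (inv_nonneg.2 hd.le)
      _ = 1 := inv_mul_cancel₀ hd.ne'
  have hmemq : ∀ n, (∫ σ in Set.Ioc 0 τ, T (τ - σ) (B (q n σ))) ∈ Rs :=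
    fun n => ⟨q n, hqcont n, hqb n, rfl⟩
  -- inner product computation
  have hinner : ∀ n, (∫ σ in Set.Ioc 0 τ, (inner ℝ (F (τ - σ)) (q n σ) : ℝ)) < u₀ := by
    intro n
    have h1 := hsep _ (subset_closure (hmemq n))
    rw [← hη] at h1
    have h2 : (inner ℝ η (∫ σ in Set.Ioc 0 τ, T (τ - σ) (B (q n σ))) : ℝ)
        = ∫ σ in Set.Ioc 0 τ, (inner ℝ η (T (τ - σ) (B (q n σ))) : ℝ) :=
      (integral_inner (hint (q n) (hqcont n) (hqb n)) η).symm
    have h3 : ∫ σ in Set.Ioc 0 τ, (inner ℝ η (T (τ - σ) (B (q n σ))) : ℝ)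
        = ∫ σ in Set.Ioc 0 τ, (inner ℝ (F (τ - σ)) (q n σ) : ℝ) := by
      apply setIntegral_congr_fun measurableSet_Ioc
      intro σ hσ
      have hmax : max (τ - σ) 0 = τ - σ := max_eq_left (by linarith [hσ.2])
      calc (inner ℝ η (T (τ - σ) (B (q n σ))) : ℝ)
          = inner ℝ ((T (τ - σ)).adjoint η) (B (q n σ)) :=
            (ContinuousLinearMap.adjoint_inner_left _ _ _).symm
        _ = inner ℝ (B.adjoint ((T (τ - σ)).adjoint η)) (q n σ) :=
            (ContinuousLinearMap.adjoint_inner_left _ _ _).symm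
        _ = inner ℝ (F (τ - σ)) (q n σ) := by rw [hFdef]; simp only [hmax]
    rw [← h3, ← h2]
    exact h1
  -- dominated convergence
  set I : ℝ := ∫ σ in Set.Ioc 0 τ, ‖F (τ - σ)‖ with hI
  have hIbdint : IntegrableOn (fun σ => M * ‖F (τ - σ)‖) (Set.Ioc 0 τ) volume :=
    (continuous_const.mul ((hFcont.comp (continuous_const.sub continuous_id)).norm)).integrableOn_Ioc
  have htends : Tendsto (fun n => ∫ σ in Set.Ioc 0 τ, (inner ℝ (F (τ - σ)) (q n σ) : ℝ)) atTop
      (nhds (∫ σ in Set.Ioc 0 τ, M * ‖F (τ - σ)‖)) := by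
    apply tendsto_integral_of_dominated_convergence (fun σ => M * ‖F (τ - σ)‖)
    · intro n
      exact (Continuous.inner (hFcont.comp (continuous_const.sub continuous_id))
        (hqcont n)).aestronglyMeasurable
    · exact hIbdint
    · intro n
      apply ae_of_all
      intro σ
      rw [Real.norm_eq_abs]
      calc |(inner ℝ (F (τ - σ)) (q n σ) : ℝ)| ≤ ‖F (τ - σ)‖ * ‖q n σ‖ :=
            abs_real_inner_le_norm _ _
        _ ≤ ‖F (τ - σ)‖ * M := mul_le_mul_of_nonneg_left (hqb n σ) (norm_nonneg _)
        _ = M * ‖F (τ - σ)‖ := mul_comm _ _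
    · apply ae_of_all
      intro σ
      have hval : ∀ n : ℕ, (inner ℝ (F (τ - σ)) (q n σ) : ℝ)
          = M * (‖F (τ - σ)‖ ^ 2 * (‖F (τ - σ)‖ + 1 / (n + 1))⁻¹) := by
        intro n
        rw [hqdef]
        simp only [real_inner_smul_right]
        rw [real_inner_self_eq_norm_sq]
        ring
      simp only [hval]
      by_cases hc : ‖F (τ - σ)‖ = 0
      · simp only [hc]
        simp
      · have hcpos : 0 < ‖F (τ - σ)‖ := lt_of_le_of_ne (norm_nonneg _) (Ne.symm hc)
        have hd : Tendsto (fun n : ℕ => (‖F (τ - σ)‖ + 1 / (n + 1))⁻¹) atTop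
            (nhds (‖F (τ - σ)‖)⁻¹) := by
          have h1 : Tendsto (fun n : ℕ => ‖F (τ - σ)‖ + 1 / (n + 1)) atTop
              (nhds (‖F (τ - σ)‖ + 0)) :=
            tendsto_const_nhds.add tendsto_one_div_add_atTop_nhds_zero_nat
          rw [add_zero] at h1
          exact h1.inv₀ hcpos.ne'
        have := (hd.const_mul (‖F (τ - σ)‖ ^ 2)).const_mul M
        have heq : M * (‖F (τ - σ)‖ ^ 2 * (‖F (τ - σ)‖)⁻¹) = M * ‖F (τ - σ)‖ := by
          field_simp
        rwa [heq] at this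
  have hMI : M * I ≤ u₀ := by
    have h1 : ∫ σ in Set.Ioc 0 τ, M * ‖F (τ - σ)‖ = M * I := by
      rw [hI, ← integral_const_mul]
    have := le_of_tendsto' htends (fun n => (hinner n).le)
    linarith [h1 ▸ this]
  -- identify I with the observability integral
  have hIeq : I = ∫ t in Set.Ioc 0 τ, ‖B.adjoint ((T t).adjoint η)‖ := by
    rw [hI]
    rw [← intervalIntegral.integral_of_le hτ.le]
    have h1 := intervalIntegral.integral_comp_sub_left (a := 0) (b := τ)
      (fun t => ‖F t‖) τ
    rw [sub_self, sub_zero] at h1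
    rw [h1, intervalIntegral.integral_of_le hτ.le]
    apply setIntegral_congr_fun measurableSet_Ioc
    intro t ht
    rw [hFdef]
    simp only [max_eq_left ht.1.le]
  have hobs' : ‖(T τ).adjoint η‖ ≤ K τ * I := by
    rw [hIeq]; exact hobs τ hτ η
  -- contradiction
  have hfinal : φ (-(T τ y)) ≤ M * I := by
    rw [← hη]
    have h1 : (inner ℝ η (-(T τ y)) : ℝ) = -(inner ℝ ((T τ).adjoint η) y : ℝ) := by
      rw [inner_neg_right]
      congr 1
      exact (ContinuousLinearMap.adjoint_inner_left _ _ _).symm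
    rw [h1]
    calc -(inner ℝ ((T τ).adjoint η) y : ℝ) ≤ |(inner ℝ ((T τ).adjoint η) y : ℝ)| :=
          neg_le_abs _
      _ ≤ ‖(T τ).adjoint η‖ * ‖y‖ := abs_real_inner_le_norm _ _
      _ ≤ (K τ * I) * ‖y‖ := mul_le_mul_of_nonneg_right hobs' (norm_nonneg y)
      _ = M * I := by rw [hM]; ring
  linarith

end AuxC

section AuxD

variable {X U : Type*} [NormedAddCommGroup X] [InnerProductSpace ℝ X] [CompleteSpace X]
    [NormedAddCommGroup U] [InnerProductSpace ℝ U] [CompleteSpace U]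
    (T : ℝ → X →L[ℝ] X) (B : U →L[ℝ] X)

lemma approx_steer' (hT0 : T 0 = 1)
    (hTadd : ∀ s t : ℝ, 0 ≤ s → 0 ≤ t → T (s + t) = (T s).comp (T t))
    (hTcont : ∀ x : X, Continuous fun t => T t x)
    (hTcontr : ∀ t : ℝ, 0 ≤ t → ‖T t‖ ≤ 1)
    (K : ℝ → ℝ) (hK_pos : ∀ τ : ℝ, 0 < τ → 0 < K τ)
    (hobs : ∀ τ : ℝ, 0 < τ → ∀ η : X,
      ‖(T τ).adjoint η‖ ≤ K τ * ∫ t in Set.Ioc 0 τ, ‖B.adjoint ((T t).adjoint η)‖) :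
    ∀ (l : ℝ) (y : X) (e : ℝ), ∃ f : ℝ → U, Continuous f ∧
      (0 < l → ∀ σ, ‖f σ‖ ≤ K l * ‖y‖) ∧
      (0 < l → 0 < e → ‖T l y + ∫ σ in Set.Ioc 0 l, T (l - σ) (B (f σ))‖ ≤ e) := by
  intro l y e
  by_cases hl : 0 < l
  · by_cases he : 0 < e
    · obtain ⟨f, h1, h2, h3⟩ := approx_steer T B hT0 hTadd hTcont hTcontr K hK_pos hobs l hl y e he
      exact ⟨f, h1, fun _ => h2, fun _ _ => h3⟩
    · obtain ⟨f, h1, h2, _⟩ := approx_steer T B hT0 hTadd hTcont hTcontr K hK_pos hobs l hl y 1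
        one_pos
      exact ⟨f, h1, fun _ => h2, fun _ h => absurd h he⟩
  · exact ⟨0, continuous_const, fun h => absurd h hl, fun h => absurd h hl⟩

/-- exact null-steering with cost `K (τ/2) * ‖y‖ + ε` -/
lemma exact_steer (hT0 : T 0 = 1)
    (hTadd : ∀ s t : ℝ, 0 ≤ s → 0 ≤ t → T (s + t) = (T s).comp (T t))
    (hTcont : ∀ x : X, Continuous fun t => T t x)
    (hTcontr : ∀ t : ℝ, 0 ≤ t → ‖T t‖ ≤ 1)
    (K : ℝ → ℝ) (hK_pos : ∀ τ : ℝ, 0 < τ → 0 < K τ)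
    (hobs : ∀ τ : ℝ, 0 < τ → ∀ η : X,
      ‖(T τ).adjoint η‖ ≤ K τ * ∫ t in Set.Ioc 0 τ, ‖B.adjoint ((T t).adjoint η)‖)
    (τ : ℝ) (hτ : 0 < τ) (y : X) (ε : ℝ) (hε : 0 < ε) :
    ∃ f : ℝ → U, StronglyMeasurable f ∧ (∀ σ, ‖f σ‖ ≤ K (τ / 2) * ‖y‖ + ε) ∧
      T τ y + ∫ σ in Set.Ioc 0 τ, T (τ - σ) (B (f σ)) = 0 := by
  classical
  choose G hGc hGb hGe using approx_steer' T B hT0 hTadd hTcont hTcontr K hK_pos hobs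
  -- the dyadic partition of (0, τ)
  set τs : ℕ → ℝ := fun k => τ - τ / 2 ^ k with hτs
  set l : ℕ → ℝ := fun k => τ / 2 ^ (k + 1) with hl
  have hpow : ∀ k : ℕ, (1:ℝ) ≤ 2 ^ k := fun k => one_le_pow₀ (by norm_num)
  have hlpos : ∀ k, 0 < l k := fun k => by positivity
  have hts0 : τs 0 = 0 := by simp [hτs]
  have htsS : ∀ k, τs (k + 1) = τs k + l k := by
    intro k
    have h2 : (2:ℝ) ^ (k + 1) = 2 ^ k * 2 := by ring
    simp only [hτs, hl, h2]
    have : (2:ℝ) ^ k ≠ 0 := by positivity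
    field_simp
    ring
  have hts_nonneg : ∀ k, 0 ≤ τs k := by
    intro k
    simp only [hτs, sub_nonneg]
    exact div_le_self hτ.le (hpow k)
  have hts_lt : ∀ k, τs k < τ := by
    intro k
    simp only [hτs]
    have : 0 < τ / 2 ^ k := by positivity
    linarith
  have hts_mono : ∀ {i j : ℕ}, i ≤ j → τs i ≤ τs j := by
    intro i j hij
    simp only [hτs, sub_le_sub_iff_left]
    apply div_le_div_of_nonneg_left hτ.le (by positivity)
    exact pow_le_pow_right₀ (by norm_num) hij
  have htsS_lt : ∀ k, τs k < τs (k + 1) := by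
    intro k; rw [htsS k]; linarith [hlpos k]
  -- tolerances
  set tol : ℕ → ℝ := fun k => min ((1:ℝ) / 2 ^ k) (ε / K (l (k + 1))) with htol
  have htolpos : ∀ k, 0 < tol k :=
    fun k => lt_min (by positivity) (div_pos hε (hK_pos _ (hlpos _)))
  -- the recursively defined errors
  set e : ℕ → X := fun k => Nat.rec y (fun k ek =>
    T (l k) ek + ∫ σ in Set.Ioc 0 (l k), T (l k - σ) (B (G (l k) ek (tol k) σ))) k with he
  have he0 : e 0 = y := rfl
  set g : ℕ → ℝ → U := fun k => G (l k) (e k) (tol k) with hg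
  have heS : ∀ k, e (k + 1)
      = T (l k) (e k) + ∫ σ in Set.Ioc 0 (l k), T (l k - σ) (B (g k σ)) := fun k => rfl
  have hgc : ∀ k, Continuous (g k) := fun k => hGc _ _ _
  have hgb : ∀ k σ, ‖g k σ‖ ≤ K (l k) * ‖e k‖ := fun k => hGb _ _ _ (hlpos k)
  have heb : ∀ k, ‖e (k + 1)‖ ≤ tol k := by
    intro k
    rw [heS k]
    exact hGe _ _ _ (hlpos k) (htolpos k)
  set Cb : ℝ := K (τ / 2) * ‖y‖ + ε with hCb
  have hCb0 : 0 < Cb := by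
    rw [hCb]
    have h0 : 0 ≤ K (τ / 2) * ‖y‖ := mul_nonneg (hK_pos _ (by linarith)).le (norm_nonneg y)
    linarith
  have hgbb : ∀ k σ, ‖g k σ‖ ≤ Cb := by
    intro k σ
    cases k with
    | zero =>
      have h1 := hgb 0 σ
      have h2 : l 0 = τ / 2 := by norm_num [hl]
      rw [he0, h2] at h1
      rw [hCb]
      linarith
    | succ k =>
      have h1 := hgb (k + 1) σ
      have h2 : ‖e (k + 1)‖ ≤ ε / K (l (k + 1)) := (heb k).trans (min_le_right _ _)
      have h3 : K (l (k + 1)) * ‖e (k + 1)‖ ≤ ε := by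
        have hKpos := hK_pos _ (hlpos (k + 1))
        calc K (l (k + 1)) * ‖e (k + 1)‖ ≤ K (l (k + 1)) * (ε / K (l (k + 1))) :=
              mul_le_mul_of_nonneg_left h2 hKpos.le
          _ = ε := by field_simp
      have h4 : 0 ≤ K (τ / 2) * ‖y‖ := mul_nonneg (hK_pos _ (by linarith)).le (norm_nonneg y)
      rw [hCb]
      linarith
  -- the glued control
  have huniq : ∀ {σ : ℝ} {k j : ℕ}, σ ∈ Set.Ioc (τs k) (τs (k + 1)) →
      σ ∈ Set.Ioc (τs j) (τs (j + 1)) → k = j := by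
    intro σ k j hk hj
    rcases lt_trichotomy k j with h | h | h
    · exfalso
      have : τs (k + 1) ≤ τs j := hts_mono h
      have := hk.2
      have := hj.1
      linarith
    · exact h
    · exfalso
      have : τs (j + 1) ≤ τs k := hts_mono h
      have := hj.2
      have := hk.1
      linarith
  set f : ℝ → U := fun σ =>
    if h : ∃ k, σ ∈ Set.Ioc (τs k) (τs (k + 1)) then g h.choose (σ - τs h.choose) else 0
    with hf
  have hfval : ∀ (k : ℕ) (σ : ℝ), σ ∈ Set.Ioc (τs k) (τs (k + 1)) → f σ = g k (σ - τs k) := by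
    intro k σ hσ
    have hex : ∃ j, σ ∈ Set.Ioc (τs j) (τs (j + 1)) := ⟨k, hσ⟩
    rw [hf]
    simp only [dif_pos hex]
    have hch : hex.choose = k := huniq hex.choose_spec hσ
    rw [hch]
  have hfbound : ∀ σ, ‖f σ‖ ≤ Cb := by
    intro σ
    rw [hf]
    by_cases hex : ∃ k, σ ∈ Set.Ioc (τs k) (τs (k + 1))
    · simp only [dif_pos hex]
      exact hgbb _ _
    · simp only [dif_neg hex, norm_zero]
      exact hCb0.le
  have hSM : StronglyMeasurable f := by
    apply stronglyMeasurable_of_tendsto (u := atTop)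
      (f := fun N σ => ∑ k ∈ Finset.range N,
        (Set.Ioc (τs k) (τs (k + 1))).indicator (fun s => g k (s - τs k)) σ)
    · intro N
      apply Finset.stronglyMeasurable_fun_sum
      intro k _
      exact (((hgc k).comp (continuous_id.sub continuous_const)).stronglyMeasurable).indicator
        measurableSet_Ioc
    · rw [tendsto_pi_nhds]
      intro σ
      by_cases hex : ∃ k, σ ∈ Set.Ioc (τs k) (τs (k + 1))
      · obtain ⟨k, hk⟩ := hex
        apply tendsto_atTop_of_eventually_const (i₀ := k + 1)
        intro N hN
        have hval : ∑ j ∈ Finset.range N,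
            (Set.Ioc (τs j) (τs (j + 1))).indicator (fun s => g j (s - τs j)) σ
            = g k (σ - τs k) := by
          rw [Finset.sum_eq_single_of_mem k (Finset.mem_range.2 (by omega))]
          · rw [Set.indicator_of_mem hk]
          · intro j _ hjk
            apply Set.indicator_of_notMem
            intro hmem
            exact hjk (huniq hmem hk)
        rw [hval, hfval k σ hk]
      · apply tendsto_atTop_of_eventually_const (i₀ := 0)
        intro N _
        have hval : ∀ j, (Set.Ioc (τs j) (τs (j + 1))).indicator
            (fun s => g j (s - τs j)) σ = 0 := by
          intro j
          apply Set.indicator_of_notMem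
          exact fun hmem => hex ⟨j, hmem⟩
        simp only [hval, Finset.sum_const_zero]
        rw [hf]
        simp only [dif_neg hex]
    
  -- the partial trajectories equal the recursive errors
  have hw : ∀ N, traj T B y f (τs N) = e N := by
    intro N
    induction N with
    | zero =>
      rw [hts0, he0]
      simp only [traj, Set.Ioc_self, Measure.restrict_empty, integral_zero_measure, hT0]
      simp
    | succ N ih =>
      have hsplit := traj_split T B hTadd hTcont hTcontr (hts_nonneg N) (htsS_lt N).le y
        (f := f) (C := Cb) hSM.aestronglyMeasurable (ae_of_all _ hfbound)
      have hdiff : τs (N + 1) - τs N = l N := by rw [htsS N]; ring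
      have hpiece : ∫ σ in Set.Ioc (τs N) (τs (N + 1)), T (τs (N + 1) - σ) (B (f σ))
          = ∫ s in Set.Ioc 0 (l N), T (l N - s) (B (g N s)) := by
        have h1 : Set.Ioc (τs N) (τs (N + 1)) = Set.Ioc (0 + τs N) (l N + τs N) := by
          rw [zero_add]
          congr 1
          rw [htsS N]; ring
        rw [h1, ← integral_Ioc_shift 0 (l N) (τs N)]
        apply setIntegral_congr_fun measurableSet_Ioc
        intro s hs
        show T (τs (N + 1) - (s + τs N)) (B (f (s + τs N))) = T (l N - s) (B (g N s))
        have h2 : τs (N + 1) - (s + τs N) = l N - s := by rw [htsS N]; ring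
        have h3 : f (s + τs N) = g N (s + τs N - τs N) := by
          apply hfval N
          constructor
          · linarith [hs.1]
          · rw [htsS N]; linarith [hs.2]
        rw [h2, h3, add_sub_cancel_right]
      rw [hsplit, hdiff, hpiece, ih, heS N]
  -- conclusion
  refine ⟨f, hSM, hfbound, ?_⟩
  have hZb : ∀ N : ℕ, ‖T τ y + ∫ σ in Set.Ioc 0 τ, T (τ - σ) (B (f σ))‖
      ≤ 1 / 2 ^ N + ‖B‖ * Cb * (τ / 2 ^ (N + 1)) := by
    intro N
    have hsplit := traj_split T B hTadd hTcont hTcontr (hts_nonneg (N + 1)) (hts_lt (N + 1)).le y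
      (f := f) (C := Cb) hSM.aestronglyMeasurable (ae_of_all _ hfbound)
    have htraj : traj T B y f τ = T (τ - τs (N + 1)) (e (N + 1))
        + ∫ σ in Set.Ioc (τs (N + 1)) τ, T (τ - σ) (B (f σ)) := by
      rw [hsplit, hw (N + 1)]
    have h1 : ‖T (τ - τs (N + 1)) (e (N + 1))‖ ≤ 1 / 2 ^ N := by
      calc ‖T (τ - τs (N + 1)) (e (N + 1))‖ ≤ ‖e (N + 1)‖ :=
            normT_le T hTcontr (by linarith [hts_lt (N + 1)]) _
        _ ≤ tol N := heb N
        _ ≤ 1 / 2 ^ N := min_le_left _ _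
    have h2 : ‖∫ σ in Set.Ioc (τs (N + 1)) τ, T (τ - σ) (B (f σ))‖
        ≤ ‖B‖ * Cb * (τ - τs (N + 1)) := by
      apply norm_setIntegral_Ioc_le (hts_lt (N + 1)).le
        (mul_nonneg (norm_nonneg B) hCb0.le)
      filter_upwards [ae_restrict_mem measurableSet_Ioc] with σ hσ
      calc ‖T (τ - σ) (B (f σ))‖ ≤ ‖B (f σ)‖ := normT_le T hTcontr (by linarith [hσ.2]) _
        _ ≤ ‖B‖ * ‖f σ‖ := B.le_opNorm _
        _ ≤ ‖B‖ * Cb := mul_le_mul_of_nonneg_left (hfbound σ) (norm_nonneg B)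
    have h3 : τ - τs (N + 1) = τ / 2 ^ (N + 1) := by simp [hτs]
    have h4 : traj T B y f τ = T τ y + ∫ σ in Set.Ioc 0 τ, T (τ - σ) (B (f σ)) := rfl
    rw [← h4, htraj]
    calc ‖T (τ - τs (N + 1)) (e (N + 1)) + ∫ σ in Set.Ioc (τs (N + 1)) τ, T (τ - σ) (B (f σ))‖
        ≤ ‖T (τ - τs (N + 1)) (e (N + 1))‖
          + ‖∫ σ in Set.Ioc (τs (N + 1)) τ, T (τ - σ) (B (f σ))‖ := norm_add_le _ _
      _ ≤ 1 / 2 ^ N + ‖B‖ * Cb * (τ / 2 ^ (N + 1)) := by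
          rw [← h3]
          exact add_le_add h1 h2
  have htend : Tendsto (fun N : ℕ => 1 / 2 ^ N + ‖B‖ * Cb * (τ / 2 ^ (N + 1))) atTop
      (nhds 0) := by
    have h1 : Tendsto (fun N : ℕ => ((1:ℝ) / 2) ^ N) atTop (nhds 0) :=
      tendsto_pow_atTop_nhds_zero_of_lt_one (by norm_num) (by norm_num)
    have h2 : Tendsto (fun N : ℕ => (1:ℝ) / 2 ^ N) atTop (nhds 0) := by
      convert h1 using 2 with N
      rw [div_pow, one_pow]
    have h3 : Tendsto (fun N : ℕ => ‖B‖ * Cb * (τ / 2 ^ (N + 1))) atTop (nhds 0) := by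
      have h4 : Tendsto (fun N : ℕ => (1:ℝ) / 2 ^ (N + 1)) atTop (nhds 0) :=
        h2.comp (tendsto_add_atTop_nat 1)
      have h5 := (h4.const_mul (‖B‖ * Cb * τ))
      rw [mul_zero] at h5
      convert h5 using 2 with N
      ring
    have := h2.add h3
    rwa [add_zero] at this
  have hfin : ‖T τ y + ∫ σ in Set.Ioc 0 τ, T (τ - σ) (B (f σ))‖ ≤ 0 :=
    ge_of_tendsto' htend hZb
  exact norm_le_zero_iff.1 hfin

end AuxD

section AuxE

variable {X U : Type*} [NormedAddCommGroup X] [InnerProductSpace ℝ X] [CompleteSpace X]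
    [NormedAddCommGroup U] [InnerProductSpace ℝ U] [CompleteSpace U]
    (T : ℝ → X →L[ℝ] X) (B : U →L[ℝ] X)

/-- normalize an a.e. admissible control to a globally defined one -/
lemma normalize_ctrl (hTcont : ∀ x : X, Continuous fun t => T t x)
    (hTcontr : ∀ t : ℝ, 0 ≤ t → ‖T t‖ ≤ 1)
    {τ C : ℝ} (hτ : 0 < τ) (hC : 0 ≤ C) (ψ : X) {f : ℝ → U}
    (hfm : AEStronglyMeasurable f (volume.restrict (Set.Ioo 0 τ)))
    (hfb : ∀ᵐ σ ∂volume.restrict (Set.Ioo 0 τ), ‖f σ‖ ≤ C) :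
    ∃ g : ℝ → U, StronglyMeasurable g ∧ (∀ σ, ‖g σ‖ ≤ C) ∧
      (∀ᵐ σ ∂volume.restrict (Set.Ioo 0 τ), g σ = f σ) ∧
      traj T B ψ g τ = traj T B ψ f τ := by
  obtain ⟨g₀, hg₀SM, hfg₀⟩ := hfm
  set s : Set ℝ := Set.Ioo 0 τ ∩ {σ | ‖g₀ σ‖ ≤ C} with hs
  have hsm : MeasurableSet s :=
    measurableSet_Ioo.inter (measurableSet_le hg₀SM.norm.measurable measurable_const)
  set g : ℝ → U := s.indicator g₀ with hg
  have hgSM : StronglyMeasurable g := hg₀SM.indicator hsm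
  have hgb : ∀ σ, ‖g σ‖ ≤ C := by
    intro σ
    rw [hg]
    by_cases hmem : σ ∈ s
    · rw [Set.indicator_of_mem hmem]; exact hmem.2
    · rw [Set.indicator_of_notMem hmem, norm_zero]; exact hC
  have hgf : ∀ᵐ σ ∂volume.restrict (Set.Ioo 0 τ), g σ = f σ := by
    filter_upwards [hfg₀, hfb, ae_restrict_mem measurableSet_Ioo] with σ h1 h2 h3
    have hmem : σ ∈ s := ⟨h3, by rw [Set.mem_setOf_eq, ← h1]; exact h2⟩
    rw [hg, Set.indicator_of_mem hmem, ← h1]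
  refine ⟨g, hgSM, hgb, hgf, ?_⟩
  simp only [traj]
  congr 1
  apply integral_congr_ae
  have hgf' : ∀ᵐ σ ∂volume.restrict (Set.Ioc 0 τ), g σ = f σ := by
    rwa [← restrict_Ioo_eq_Ioc]
  filter_upwards [hgf'] with σ hσ
  rw [hσ]

/-- time-shifting a control: the trajectory at the earlier time differs from the original one
by `T τ' y` with `y` small -/
lemma shift_traj (hTadd : ∀ s t : ℝ, 0 ≤ s → 0 ≤ t → T (s + t) = (T s).comp (T t))
    (hTcont : ∀ x : X, Continuous fun t => T t x)
    (hTcontr : ∀ t : ℝ, 0 ≤ t → ‖T t‖ ≤ 1)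
    {τ' τ : ℝ} (h0 : 0 < τ') (hle : τ' ≤ τ) (ψ : X) {f : ℝ → U} {C : ℝ} (hC : 0 ≤ C)
    (hSM : StronglyMeasurable f) (hbd : ∀ σ, ‖f σ‖ ≤ C) :
    ∃ y : X, ‖y‖ ≤ ‖ψ - T (τ - τ') ψ‖ + ‖B‖ * C * (τ - τ') ∧
      traj T B ψ (fun σ => f (σ + (τ - τ'))) τ' = traj T B ψ f τ + T τ' y := by
  set c : ℝ := τ - τ' with hc
  have hc0 : 0 ≤ c := by rw [hc]; linarith
  have hcτ : c ≤ τ := by rw [hc]; linarith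
  have hker : ∀ {a b t : ℝ}, b ≤ t →
      IntegrableOn (fun σ => T (t - σ) (B (f σ))) (Set.Ioc a b) volume := by
    intro a b t hbt
    exact integrable_kernel T B hTcont hTcontr hbt hSM.aestronglyMeasurable
      (ae_of_all _ hbd)
  -- step 1 : the shifted integral
  have hstep1 : ∫ σ in Set.Ioc 0 τ', T (τ' - σ) (B (f (σ + c)))
      = ∫ s in Set.Ioc c τ, T (τ - s) (B (f s)) := by
    have h1 : ∀ σ ∈ Set.Ioc (0:ℝ) τ', T (τ' - σ) (B (f (σ + c)))
        = (fun s => T (τ - s) (B (f s))) (σ + c) := by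
      intro σ _
      have he : τ - (σ + c) = τ' - σ := by rw [hc]; ring
      simp only [he]
    have h2 := integral_Ioc_shift (g := fun s => T (τ - s) (B (f s))) 0 τ' c
    rw [zero_add] at h2
    have h3 : τ' + c = τ := by rw [hc]; ring
    rw [h3] at h2
    rw [← h2]
    exact setIntegral_congr_fun measurableSet_Ioc h1
  -- step 2 : split
  have hstep2 : ∫ s in Set.Ioc 0 τ, T (τ - s) (B (f s))
      = (∫ s in Set.Ioc 0 c, T (τ - s) (B (f s)))
        + ∫ s in Set.Ioc c τ, T (τ - s) (B (f s)) := by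
    rw [← Set.Ioc_union_Ioc_eq_Ioc hc0 hcτ]
    exact setIntegral_union (Set.Ioc_disjoint_Ioc_of_le le_rfl) measurableSet_Ioc
      (hker hcτ) (hker le_rfl)
  -- step 3 : factor the early part
  have hstep3 : ∫ s in Set.Ioc 0 c, T (τ - s) (B (f s))
      = T τ' (∫ s in Set.Ioc 0 c, T (c - s) (B (f s))) := by
    have h1 : ∀ s ∈ Set.Ioc (0:ℝ) c, T (τ - s) (B (f s)) = T τ' (T (c - s) (B (f s))) := by
      intro s hs
      have heq : τ - s = τ' + (c - s) := by rw [hc]; ring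
      rw [heq, hTadd τ' (c - s) h0.le (by linarith [hs.2])]
      rfl
    rw [setIntegral_congr_fun measurableSet_Ioc h1]
    exact (T τ').integral_comp_comm (hker le_rfl)
  have hstep4 : T τ ψ = T τ' (T c ψ) := by
    have h2 : T τ = (T τ').comp (T c) := by
      rw [← hTadd τ' c h0.le hc0]
      congr 1
      rw [hc]; ring
    rw [h2]; rfl
  refine ⟨ψ - T c ψ - ∫ s in Set.Ioc 0 c, T (c - s) (B (f s)), ?_, ?_⟩
  · have h1 : ‖∫ s in Set.Ioc 0 c, T (c - s) (B (f s))‖ ≤ ‖B‖ * C * (c - 0) := by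
      apply norm_setIntegral_Ioc_le hc0 (mul_nonneg (norm_nonneg B) hC)
      filter_upwards [ae_restrict_mem measurableSet_Ioc] with s hs
      calc ‖T (c - s) (B (f s))‖ ≤ ‖B (f s)‖ := normT_le T hTcontr (by linarith [hs.2]) _
        _ ≤ ‖B‖ * ‖f s‖ := B.le_opNorm _
        _ ≤ ‖B‖ * C := mul_le_mul_of_nonneg_left (hbd s) (norm_nonneg B)
    rw [sub_zero] at h1
    calc ‖ψ - T c ψ - ∫ s in Set.Ioc 0 c, T (c - s) (B (f s))‖
        ≤ ‖ψ - T c ψ‖ + ‖∫ s in Set.Ioc 0 c, T (c - s) (B (f s))‖ := norm_sub_le _ _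
      _ ≤ ‖ψ - T c ψ‖ + ‖B‖ * C * c := by linarith
  · simp only [traj]
    rw [hstep1]
    have h5 : ∫ s in Set.Ioc c τ, T (τ - s) (B (f s))
        = (∫ s in Set.Ioc 0 τ, T (τ - s) (B (f s)))
          - T τ' (∫ s in Set.Ioc 0 c, T (c - s) (B (f s))) := by
      rw [hstep2, hstep3]; abel
    rw [h5, hstep4, map_sub, map_sub]
    abel

/-- `N*` is non-increasing -/
lemma nstar_mono (hT0 : T 0 = 1)
    (hTadd : ∀ s t : ℝ, 0 ≤ s → 0 ≤ t → T (s + t) = (T s).comp (T t))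
    (hTcont : ∀ x : X, Continuous fun t => T t x)
    (hTcontr : ∀ t : ℝ, 0 ≤ t → ‖T t‖ ≤ 1)
    (r : ℝ) (ψ : X) (Nstar : ℝ → ℝ)
    (hNstar : ∀ τ : ℝ, 0 < τ → IsLeast {C : ℝ | 0 ≤ C ∧ ∃ f : ℝ → U,
      AEStronglyMeasurable f (volume.restrict (Set.Ioo 0 τ)) ∧
      (∀ᵐ t ∂volume.restrict (Set.Ioo 0 τ), ‖f t‖ ≤ C) ∧
      traj T B ψ f τ ∈ Metric.closedBall (0 : X) r} (Nstar τ))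
    {τ₁ τ₂ : ℝ} (h1 : 0 < τ₁) (h12 : τ₁ ≤ τ₂) : Nstar τ₂ ≤ Nstar τ₁ := by
  obtain ⟨⟨hN0, f, hfm, hfb, hftraj⟩, -⟩ := hNstar τ₁ h1
  have h2 : 0 < τ₂ := lt_of_lt_of_le h1 h12
  obtain ⟨g, hgSM, hgb, hgf, hgtraj⟩ :=
    normalize_ctrl T B hTcont hTcontr h1 hN0 ψ hfm hfb
  set g' : ℝ → U := (Set.Ioo 0 τ₁).indicator g with hg'
  have hg'SM : StronglyMeasurable g' := hgSM.indicator measurableSet_Ioo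
  have hg'b : ∀ σ, ‖g' σ‖ ≤ Nstar τ₁ := by
    intro σ
    rw [hg']
    by_cases hmem : σ ∈ Set.Ioo 0 τ₁
    · rw [Set.indicator_of_mem hmem]; exact hgb σ
    · rw [Set.indicator_of_notMem hmem, norm_zero]; exact hN0
  -- trajectory of g' at τ₁ agrees with that of g
  have htraj1 : traj T B ψ g' τ₁ = traj T B ψ g τ₁ := by
    simp only [traj]
    congr 1
    apply integral_congr_ae
    have hmem : ∀ᵐ σ ∂volume.restrict (Set.Ioc 0 τ₁), σ ∈ Set.Ioo 0 τ₁ := by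
      rw [← restrict_Ioo_eq_Ioc]
      exact ae_restrict_mem measurableSet_Ioo
    filter_upwards [hmem] with σ hσ
    rw [hg', Set.indicator_of_mem hσ]
  -- split the trajectory of g' at τ₂
  have hsplit := traj_split T B hTadd hTcont hTcontr h1.le h12 ψ
    (f := g') (C := Nstar τ₁) hg'SM.aestronglyMeasurable (ae_of_all _ hg'b)
  have hzero : ∫ σ in Set.Ioc τ₁ τ₂, T (τ₂ - σ) (B (g' σ)) = 0 := by
    have h1' : ∀ σ ∈ Set.Ioc τ₁ τ₂, T (τ₂ - σ) (B (g' σ)) = 0 := by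
      intro σ hσ
      have : σ ∉ Set.Ioo 0 τ₁ := fun hmem => absurd hσ.1 (not_lt.2 hmem.2.le)
      rw [hg', Set.indicator_of_notMem this, map_zero, map_zero]
    rw [setIntegral_congr_fun measurableSet_Ioc h1']
    simp
  have hball : traj T B ψ g' τ₂ ∈ Metric.closedBall (0 : X) r := by
    rw [hsplit, hzero, add_zero, htraj1, hgtraj, mem_closedBall_zero_iff]
    rw [mem_closedBall_zero_iff] at hftraj
    calc ‖T (τ₂ - τ₁) (traj T B ψ f τ₁)‖ ≤ ‖traj T B ψ f τ₁‖ :=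
          normT_le T hTcontr (by linarith) _
      _ ≤ r := hftraj
  exact (hNstar τ₂ h2).2 ⟨hN0, g', hg'SM.aestronglyMeasurable, ae_of_all _ hg'b, hball⟩

end AuxE

/-- Under the same assumptions as Statement 13, the minimal norm map
`τ ↦ N*(τ)` is continuous on `(0, τ̂)`, where `τ̂ = inf {t : ‖T_t ψ‖ ≤ r}`; the interval
`(0, τ̂)` is expressed as `{τ | 0 < τ ∧ ∀ s ∈ (0,τ], r < ‖T_s ψ‖}`. -/
theorem stmt14 {X U : Type*} [NormedAddCommGroup X] [InnerProductSpace ℝ X] [CompleteSpace X]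
    [NormedAddCommGroup U] [InnerProductSpace ℝ U] [CompleteSpace U]
    (T : ℝ → X →L[ℝ] X) (B : U →L[ℝ] X)
    -- `T` is a `C₀`-semigroup of contractions (generated by `-A`)
    (hT0 : T 0 = 1)
    (hTadd : ∀ s t : ℝ, 0 ≤ s → 0 ≤ t → T (s + t) = (T s).comp (T t))
    (hTcont : ∀ x : X, Continuous fun t => T t x)
    (hTcontr : ∀ t : ℝ, 0 ≤ t → ‖T t‖ ≤ 1)
    -- the `L¹` observability inequality `K(τ) ∫_0^τ ‖B*T*_t η‖ dt ≥ ‖T*_τ η‖`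
    (K : ℝ → ℝ) (hK_pos : ∀ τ : ℝ, 0 < τ → 0 < K τ) (hK_cont : ContinuousOn K (Set.Ioi 0))
    (hobs : ∀ τ : ℝ, 0 < τ → ∀ η : X,
      ‖(T τ).adjoint η‖ ≤ K τ * ∫ t in Set.Ioc 0 τ, ‖B.adjoint ((T t).adjoint η)‖)
    (r : ℝ) (hr : 0 < r) (ψ : X) (hψ : ψ ∉ Metric.closedBall (0 : X) r)
    -- `N*(τ)` is the minimal `L^∞`-norm of controls steering `ψ` into `B(0,r)` at time `τ`
    (Nstar : ℝ → ℝ)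
    (hNstar : ∀ τ : ℝ, 0 < τ → IsLeast {C : ℝ | 0 ≤ C ∧ ∃ f : ℝ → U,
      AEStronglyMeasurable f (volume.restrict (Set.Ioo 0 τ)) ∧
      (∀ᵐ t ∂volume.restrict (Set.Ioo 0 τ), ‖f t‖ ≤ C) ∧
      traj T B ψ f τ ∈ Metric.closedBall (0 : X) r} (Nstar τ))
    :
    ContinuousOn Nstar {τ : ℝ | 0 < τ ∧ ∀ s ∈ Set.Ioc (0 : ℝ) τ, r < ‖T s ψ‖} := by
  intro τ hτS
  obtain ⟨hτpos, -⟩ := hτS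
  have hτ2 : (0:ℝ) < τ / 2 := by linarith
  rw [Metric.continuousWithinAt_iff]
  intro ε hε
  have hN₀ : 0 ≤ Nstar τ := (hNstar τ hτpos).1.1
  set N₀ : ℝ := Nstar τ with hN₀def
  set K₀ : ℝ := K (τ / 2) + 1 with hK₀def
  have hK₀pos : 0 < K₀ := by
    have := hK_pos _ hτ2
    rw [hK₀def]; linarith
  -- continuity of K at τ/2 within (0,∞)
  have hKc := hK_cont (τ / 2) (Set.mem_Ioi.2 hτ2)
  rw [Metric.continuousWithinAt_iff] at hKc
  obtain ⟨δ₁, hδ₁pos, hδ₁⟩ := hKc 1 one_pos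
  -- strong continuity of `T · ψ` at `0`
  have hTψ : ContinuousAt (fun t => T t ψ) 0 := (hTcont ψ).continuousAt
  rw [Metric.continuousAt_iff] at hTψ
  obtain ⟨δ₂, hδ₂pos, hδ₂⟩ := hTψ (ε / (8 * K₀)) (by positivity)
  set δ : ℝ := min (min (τ / 2) δ₁) (min δ₂ (ε / (8 * K₀ * (‖B‖ * N₀ + 1)))) with hδdef
  have hδN : 0 ≤ ‖B‖ * N₀ := mul_nonneg (norm_nonneg B) hN₀
  have hδpos : 0 < δ :=
    lt_min (lt_min (by linarith) hδ₁pos) (lt_min hδ₂pos (by positivity))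
  refine ⟨δ, hδpos, ?_⟩
  intro τ' hτ'S hdist
  obtain ⟨hτ'pos, -⟩ := hτ'S
  rw [Real.dist_eq] at hdist
  have hδa : δ ≤ τ / 2 := le_trans (min_le_left _ _) (min_le_left _ _)
  have hδb : δ ≤ δ₁ := le_trans (min_le_left _ _) (min_le_right _ _)
  have hδc : δ ≤ δ₂ := le_trans (min_le_right _ _) (min_le_left _ _)
  have hδd : δ ≤ ε / (8 * K₀ * (‖B‖ * N₀ + 1)) :=
    le_trans (min_le_right _ _) (min_le_right _ _)
  rw [Real.dist_eq]
  -- generic small-error estimates, for any `0 ≤ c < δ`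
  have hgen : ∀ c : ℝ, 0 ≤ c → c < δ →
      ‖ψ - T c ψ‖ + ‖B‖ * N₀ * c ≤ ε / (4 * K₀) := by
    intro c hc0 hcδ
    have h1 : ‖ψ - T c ψ‖ ≤ ε / (8 * K₀) := by
      have hd : dist c 0 < δ₂ := by
        rw [Real.dist_eq, sub_zero, abs_of_nonneg hc0]; linarith
      have := hδ₂ hd
      rw [dist_eq_norm, hT0, ContinuousLinearMap.one_apply] at this
      rw [norm_sub_rev]
      linarith
    have h2 : ‖B‖ * N₀ * c ≤ ε / (8 * K₀) := by
      have h3 : ‖B‖ * N₀ * c ≤ (‖B‖ * N₀ + 1) * (ε / (8 * K₀ * (‖B‖ * N₀ + 1))) := by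
        apply mul_le_mul (by linarith) (by linarith) hc0 (by linarith)
      have h4 : (‖B‖ * N₀ + 1) * (ε / (8 * K₀ * (‖B‖ * N₀ + 1))) = ε / (8 * K₀) := by
        field_simp
      linarith
    have h5 : ε / (8 * K₀) + ε / (8 * K₀) = ε / (4 * K₀) := by
      rw [← add_div, show ε + ε = 2 * ε by ring, show (8:ℝ) * K₀ = 2 * (4 * K₀) by ring]
      exact mul_div_mul_left ε (4 * K₀) (by norm_num)
    linarith
  rcases le_or_gt τ' τ with hle | hlt
  · -- left case : τ' ≤ τ
    set c : ℝ := τ - τ' with hc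
    have hc0 : 0 ≤ c := by rw [hc]; linarith
    have hcδ : c < δ := by
      rw [hc]
      calc τ - τ' ≤ |τ' - τ| := by rw [abs_sub_comm]; exact le_abs_self _
        _ < δ := hdist
    -- K (τ'/2) ≤ K₀
    have hKτ' : K (τ' / 2) ≤ K₀ := by
      have hmem : τ' / 2 ∈ Set.Ioi (0:ℝ) := Set.mem_Ioi.2 (by linarith)
      have hd : dist (τ' / 2) (τ / 2) < δ₁ := by
        rw [Real.dist_eq]
        have he : τ' / 2 - τ / 2 = (τ' - τ) / 2 := by ring
        rw [he, abs_div]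
        have : |(2:ℝ)| = 2 := by norm_num
        rw [this]
        have := abs_sub_comm τ' τ
        calc |τ' - τ| / 2 < δ / 2 := by linarith
          _ ≤ δ₁ := by linarith
      have := hδ₁ hmem hd
      rw [Real.dist_eq, abs_lt] at this
      rw [hK₀def]
      linarith [this.1, this.2]
    -- monotonicity
    have hmono : N₀ ≤ Nstar τ' :=
      nstar_mono T B hT0 hTadd hTcont hTcontr r ψ Nstar hNstar hτ'pos hle
    -- optimal control at τ
    obtain ⟨⟨hN₀0, f, hfm, hfb, hftraj⟩, -⟩ := hNstar τ hτpos
    obtain ⟨f₀, hf₀SM, hf₀b, -, hf₀traj⟩ :=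
      normalize_ctrl T B hTcont hTcontr hτpos hN₀0 ψ hfm hfb
    obtain ⟨y, hy, htrajv⟩ :=
      shift_traj T B hTadd hTcont hTcontr hτ'pos hle ψ hN₀0 hf₀SM hf₀b
    obtain ⟨w, hwSM, hwb, hwzero⟩ := exact_steer T B hT0 hTadd hTcont hTcontr K hK_pos hobs
      τ' hτ'pos y (ε / 8) (by positivity)
    set u : ℝ → U := fun σ => f₀ (σ + c) + w σ with hu
    have huSM : StronglyMeasurable u :=
      (hf₀SM.comp_measurable (measurable_add_const c)).add hwSM
    have hv_int : IntegrableOn (fun σ => T (τ' - σ) (B (f₀ (σ + c)))) (Set.Ioc 0 τ') volume :=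
      integrable_kernel T B hTcont hTcontr le_rfl
        ((hf₀SM.comp_measurable (measurable_add_const c)).aestronglyMeasurable)
        (ae_of_all _ (fun σ => hf₀b (σ + c)))
    have hw_int : IntegrableOn (fun σ => T (τ' - σ) (B (w σ))) (Set.Ioc 0 τ') volume :=
      integrable_kernel T B hTcont hTcontr le_rfl hwSM.aestronglyMeasurable
        (ae_of_all _ hwb)
    have htraju : traj T B ψ u τ'
        = traj T B ψ (fun σ => f₀ (σ + c)) τ'
          + ∫ σ in Set.Ioc 0 τ', T (τ' - σ) (B (w σ)) := by
      simp only [traj]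
      have h1 : ∀ σ ∈ Set.Ioc (0:ℝ) τ', T (τ' - σ) (B (u σ))
          = T (τ' - σ) (B (f₀ (σ + c))) + T (τ' - σ) (B (w σ)) := by
        intro σ _
        show T (τ' - σ) (B (f₀ (σ + c) + w σ)) = _
        rw [map_add, map_add]
      rw [setIntegral_congr_fun measurableSet_Ioc h1, integral_add hv_int hw_int]
      abel
    have hfinal : traj T B ψ u τ' = traj T B ψ f τ := by
      rw [htraju, htrajv, hf₀traj, add_assoc, hwzero, add_zero]
    set C' : ℝ := N₀ + (K (τ' / 2) * ‖y‖ + ε / 8) with hC'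
    have hKy0 : 0 ≤ K (τ' / 2) * ‖y‖ :=
      mul_nonneg (hK_pos _ (by linarith)).le (norm_nonneg y)
    have hC'0 : 0 ≤ C' := by rw [hC']; linarith
    have hub : ∀ σ, ‖u σ‖ ≤ C' := by
      intro σ
      rw [hu, hC']
      calc ‖f₀ (σ + c) + w σ‖ ≤ ‖f₀ (σ + c)‖ + ‖w σ‖ := norm_add_le _ _
        _ ≤ N₀ + (K (τ' / 2) * ‖y‖ + ε / 8) := add_le_add (hf₀b _) (hwb σ)
    have hN' : Nstar τ' ≤ C' := (hNstar τ' hτ'pos).2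
      ⟨hC'0, u, huSM.aestronglyMeasurable, ae_of_all _ hub, by rw [hfinal]; exact hftraj⟩
    -- numeric estimate
    have hyb : ‖y‖ ≤ ε / (4 * K₀) := le_trans hy (hgen c hc0 hcδ)
    have hKy : K (τ' / 2) * ‖y‖ ≤ K₀ * (ε / (4 * K₀)) :=
      mul_le_mul hKτ' hyb (norm_nonneg y) hK₀pos.le
    have hKey : K₀ * (ε / (4 * K₀)) = ε / 4 := by field_simp
    rw [abs_lt]
    constructor
    · nlinarith [hmono]
    · have := hN'
      rw [hC'] at this
      nlinarith [hKy, hKey, hε]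
  · -- right case : τ < τ'
    set c : ℝ := τ' - τ with hc
    have hc0 : 0 ≤ c := by rw [hc]; linarith
    have hcδ : c < δ := by
      rw [hc]
      calc τ' - τ ≤ |τ' - τ| := le_abs_self _
        _ < δ := hdist
    have hle : τ ≤ τ' := hlt.le
    have hmono : Nstar τ' ≤ N₀ :=
      nstar_mono T B hT0 hTadd hTcont hTcontr r ψ Nstar hNstar hτpos hle
    have hN'0 : 0 ≤ Nstar τ' := (hNstar τ' hτ'pos).1.1
    -- optimal control at τ'
    obtain ⟨⟨hN'0', f, hfm, hfb, hftraj⟩, -⟩ := hNstar τ' hτ'pos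
    obtain ⟨f₀, hf₀SM, hf₀b, -, hf₀traj⟩ :=
      normalize_ctrl T B hTcont hTcontr hτ'pos hN'0 ψ hfm hfb
    obtain ⟨y, hy, htrajv⟩ :=
      shift_traj T B hTadd hTcont hTcontr hτpos hle ψ hN'0 hf₀SM hf₀b
    obtain ⟨w, hwSM, hwb, hwzero⟩ := exact_steer T B hT0 hTadd hTcont hTcontr K hK_pos hobs
      τ hτpos y (ε / 8) (by positivity)
    set u : ℝ → U := fun σ => f₀ (σ + c) + w σ with hu
    have huSM : StronglyMeasurable u :=
      (hf₀SM.comp_measurable (measurable_add_const c)).add hwSM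
    have hv_int : IntegrableOn (fun σ => T (τ - σ) (B (f₀ (σ + c)))) (Set.Ioc 0 τ) volume :=
      integrable_kernel T B hTcont hTcontr le_rfl
        ((hf₀SM.comp_measurable (measurable_add_const c)).aestronglyMeasurable)
        (ae_of_all _ (fun σ => hf₀b (σ + c)))
    have hw_int : IntegrableOn (fun σ => T (τ - σ) (B (w σ))) (Set.Ioc 0 τ) volume :=
      integrable_kernel T B hTcont hTcontr le_rfl hwSM.aestronglyMeasurable
        (ae_of_all _ hwb)
    have htraju : traj T B ψ u τ
        = traj T B ψ (fun σ => f₀ (σ + c)) τ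
          + ∫ σ in Set.Ioc 0 τ, T (τ - σ) (B (w σ)) := by
      simp only [traj]
      have h1 : ∀ σ ∈ Set.Ioc (0:ℝ) τ, T (τ - σ) (B (u σ))
          = T (τ - σ) (B (f₀ (σ + c))) + T (τ - σ) (B (w σ)) := by
        intro σ _
        show T (τ - σ) (B (f₀ (σ + c) + w σ)) = _
        rw [map_add, map_add]
      rw [setIntegral_congr_fun measurableSet_Ioc h1, integral_add hv_int hw_int]
      abel
    have hshift_eq : τ' - τ = c := by rw [hc]
    have hfinal : traj T B ψ u τ = traj T B ψ f τ' := by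
      rw [htraju]
      rw [hshift_eq] at htrajv
      rw [htrajv, hf₀traj, add_assoc, hwzero, add_zero]
    set C' : ℝ := Nstar τ' + (K (τ / 2) * ‖y‖ + ε / 8) with hC'
    have hKy0 : 0 ≤ K (τ / 2) * ‖y‖ :=
      mul_nonneg (hK_pos _ (by linarith)).le (norm_nonneg y)
    have hC'0 : 0 ≤ C' := by rw [hC']; linarith
    have hub : ∀ σ, ‖u σ‖ ≤ C' := by
      intro σ
      rw [hu, hC']
      calc ‖f₀ (σ + c) + w σ‖ ≤ ‖f₀ (σ + c)‖ + ‖w σ‖ := norm_add_le _ _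
        _ ≤ Nstar τ' + (K (τ / 2) * ‖y‖ + ε / 8) := add_le_add (hf₀b _) (hwb σ)
    have hN' : N₀ ≤ C' := (hNstar τ hτpos).2
      ⟨hC'0, u, huSM.aestronglyMeasurable, ae_of_all _ hub, by rw [hfinal]; exact hftraj⟩
    -- numeric estimate
    have hy' : ‖y‖ ≤ ‖ψ - T c ψ‖ + ‖B‖ * N₀ * c := by
      have h1 : ‖B‖ * Nstar τ' * c ≤ ‖B‖ * N₀ * c := by
        apply mul_le_mul_of_nonneg_right _ hc0
        exact mul_le_mul_of_nonneg_left hmono (norm_nonneg B)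
      rw [hshift_eq] at hy
      linarith
    have hyb : ‖y‖ ≤ ε / (4 * K₀) := le_trans hy' (hgen c hc0 hcδ)
    have hKτ : K (τ / 2) ≤ K₀ := by rw [hK₀def]; linarith
    have hKy : K (τ / 2) * ‖y‖ ≤ K₀ * (ε / (4 * K₀)) :=
      mul_le_mul hKτ hyb (norm_nonneg y) hK₀pos.le
    have hKey : K₀ * (ε / (4 * K₀)) = ε / 4 := by field_simp
    rw [abs_lt]
    constructor
    · have := hN'
      rw [hC'] at this
      nlinarith [hKy, hKey, hε]
    · nlinarith [hmono, hε]
end
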